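/- arXiv:2508.19640 — 4 statements merged into one kernel-verified Lean document; each statement's English description precedes it below -/
import Mathlib

section
/- Deterministic localization of the constrained maximum partial-likelihood estimator (key step in the proof of Lemma B.2): Let C_Z > 0 and C_β > 0, and let D be a survival dataset of size n ≥ 2 satisfying the covariate bound C_Z. Let β₀ ∈ ℝ^d with ‖β₀‖₂ ≤ C_β, and let β̂ be any maximizer of the log partial likelihood ℓ(·;D) over the closed Euclidean ball B̄(0, C_β). Set λ := λ_min(H(β₀;D)) and g := ‖ℓ̇(β₀;D)‖₂. If λ > 0 and g/λ < (log 2)/(4 C_Z), then ‖β̂ − β₀‖₂ ≤ 2 g / λ. -/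
open scoped BigOperators
open MeasureTheory Real
open scoped RealInnerProductSpace
noncomputable section

structure SurvData (n d : ℕ) where
  T : Fin n → ℝ
  Δ : Fin n → Bool
  Z : Fin n → ℝ → EuclideanSpace ℝ (Fin d)

namespace SurvData

variable {n d : ℕ}

/-- Observed times lie in `[0,1]`. -/
def valid (D : SurvData n d) : Prop := ∀ i, D.T i ∈ Set.Icc (0 : ℝ) 1

/-- Covariate bound: `‖Z_i(t)‖₂ ≤ C_Z` for all `i` and all `t ∈ [0,1]`. -/
def covBound (D : SurvData n d) (CZ : ℝ) : Prop :=
  ∀ i, ∀ t ∈ Set.Icc (0 : ℝ) 1, ‖D.Z i t‖ ≤ CZ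

def S0 (D : SurvData n d) (β : EuclideanSpace ℝ (Fin d)) (t : ℝ) : ℝ :=
  (n : ℝ)⁻¹ * ∑ j, if t ≤ D.T j then Real.exp ⟪β, D.Z j t⟫ else 0

def S1 (D : SurvData n d) (β : EuclideanSpace ℝ (Fin d)) (t : ℝ) :
    EuclideanSpace ℝ (Fin d) :=
  (n : ℝ)⁻¹ • ∑ j, if t ≤ D.T j then Real.exp ⟪β, D.Z j t⟫ • D.Z j t else 0

def Zbar (D : SurvData n d) (β : EuclideanSpace ℝ (Fin d)) (t : ℝ) :
    EuclideanSpace ℝ (Fin d) :=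
  (D.S0 β t)⁻¹ • D.S1 β t

/-- The Cox partial-likelihood score `ℓ̇(β; D)`. -/
def score (D : SurvData n d) (β : EuclideanSpace ℝ (Fin d)) :
    EuclideanSpace ℝ (Fin d) :=
  (n : ℝ)⁻¹ • ∑ i, if D.Δ i then D.Z i (D.T i) - D.Zbar β (D.T i) else 0

/-- Neighbouring datasets: they differ in at most one triple. -/
def Neighbor (D D' : SurvData n d) : Prop :=
  ∃ i0 : Fin n, ∀ i, i ≠ i0 → D.T i = D'.T i ∧ D.Δ i = D'.Δ i ∧ D.Z i = D'.Z i

def S2mat (D : SurvData n d) (β : EuclideanSpace ℝ (Fin d)) (t : ℝ) :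
    Matrix (Fin d) (Fin d) ℝ :=
  (n : ℝ)⁻¹ • ∑ j, if t ≤ D.T j then
    Real.exp ⟪β, D.Z j t⟫ • Matrix.of (fun k l => D.Z j t k * D.Z j t l) else 0

def Vmat (D : SurvData n d) (β : EuclideanSpace ℝ (Fin d)) (t : ℝ) :
    Matrix (Fin d) (Fin d) ℝ :=
  (D.S0 β t)⁻¹ • D.S2mat β t - Matrix.of (fun k l => D.Zbar β t k * D.Zbar β t l)

/-- The information matrix `H(β; D)`, i.e. minus the Hessian of the log partial
likelihood. -/
def infoMat (D : SurvData n d) (β : EuclideanSpace ℝ (Fin d)) :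
    Matrix (Fin d) (Fin d) ℝ :=
  (n : ℝ)⁻¹ • ∑ i, if D.Δ i then D.Vmat β (D.T i) else 0


/-- The log partial likelihood `ℓ(β; D)`. -/
def loglik (D : SurvData n d) (β : EuclideanSpace ℝ (Fin d)) : ℝ :=
  (n : ℝ)⁻¹ * ∑ i, if D.Δ i then
    ⟪β, D.Z i (D.T i)⟫ -
      Real.log (∑ j, if D.T i ≤ D.T j then Real.exp ⟪β, D.Z j (D.T i)⟫ else 0)
  else 0

end SurvData


section AuxLemmas

open Matrix

private lemma sum_sq_cauchy {m : ℕ} (w x : Fin m → ℝ) (hw : ∀ j, 0 ≤ w j) :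
    (∑ j, x j * w j)^2 ≤ (∑ j, (x j)^2 * w j) * (∑ j, w j) :=
  Finset.sum_sq_le_sum_mul_sum_of_sq_eq_mul _ (fun j _ => mul_nonneg (sq_nonneg _) (hw j))
    (fun j _ => hw j) (fun j _ => by ring)

private lemma var_comp {m : ℕ} (w w' x : Fin m → ℝ) (ρ : ℝ) (hρ : 0 < ρ)
    (hw : ∀ j, 0 ≤ w j) (hW : 0 < ∑ j, w j)
    (hlow : ∀ j, ρ * w j ≤ w' j) (hhigh : ∀ j, w' j ≤ ρ⁻¹ * w j) :
    ρ^2 * (((∑ j, (x j)^2 * w j) * (∑ j, w j) - (∑ j, x j * w j)^2) / (∑ j, w j)^2)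
      ≤ ((∑ j, (x j)^2 * w' j) * (∑ j, w' j) - (∑ j, x j * w' j)^2) / (∑ j, w' j)^2 := by
  have hw' : ∀ j, 0 ≤ w' j := fun j => le_trans (mul_nonneg hρ.le (hw j)) (hlow j)
  set W := ∑ j, w j with hWdef
  set W' := ∑ j, w' j with hW'def
  have hW' : 0 < W' := by
    calc (0:ℝ) < ρ * W := by positivity
    _ = ∑ j, ρ * w j := by rw [Finset.mul_sum]
    _ ≤ W' := Finset.sum_le_sum fun j _ => hlow j
  have hWW' : ρ * W' ≤ W := by
    calc ρ * W' = ∑ j, ρ * w' j := by rw [Finset.mul_sum]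
    _ ≤ ∑ j, w j := Finset.sum_le_sum fun j _ => by
        calc ρ * w' j ≤ ρ * (ρ⁻¹ * w j) := by nlinarith [hhigh j]
        _ = w j := by field_simp
    _ = W := rfl
  set Sx := ∑ j, x j * w j with hSx
  set Sx' := ∑ j, x j * w' j with hSx'
  set Sxx := ∑ j, (x j)^2 * w j with hSxx
  set Sxx' := ∑ j, (x j)^2 * w' j with hSxx'
  set Q := Sxx * W - Sx^2 with hQ
  set Q' := Sxx' * W' - Sx'^2 with hQ'
  have hQ0 : 0 ≤ Q := sub_nonneg.2 (sum_sq_cauchy w x hw)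
  set μ := Sx' / W' with hμ
  have id1 : ∑ j, (x j - μ)^2 * w j = Sxx - 2*μ*Sx + μ^2*W := by
    rw [hSxx, hSx, hWdef, Finset.mul_sum, Finset.mul_sum, ← Finset.sum_sub_distrib,
      ← Finset.sum_add_distrib]
    exact Finset.sum_congr rfl fun j _ => by ring
  have id2 : ∑ j, (x j - μ)^2 * w' j = Sxx' - 2*μ*Sx' + μ^2*W' := by
    rw [hSxx', hSx', hW'def, Finset.mul_sum, Finset.mul_sum, ← Finset.sum_sub_distrib,
      ← Finset.sum_add_distrib]
    exact Finset.sum_congr rfl fun j _ => by ring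
  set S := ∑ j, (x j - μ)^2 * w j with hSdef
  set S' := ∑ j, (x j - μ)^2 * w' j with hS'def
  have key3 : ρ * S ≤ S' := by
    rw [hSdef, hS'def, Finset.mul_sum]
    exact Finset.sum_le_sum fun j _ => by nlinarith [sq_nonneg (x j - μ), hlow j, hw j]
  have hs : 0 ≤ S :=
    Finset.sum_nonneg fun j _ => mul_nonneg (sq_nonneg _) (hw j)
  have hs' : 0 ≤ S' :=
    Finset.sum_nonneg fun j _ => mul_nonneg (sq_nonneg _) (hw' j)
  clear_value W W' Sx Sx' Sxx Sxx' Q Q' μ S S'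
  clear hWdef hW'def hSx hSx' hSxx hSxx' hSdef hS'def
  have key1 : Q ≤ S * W := by
    rw [id1]; nlinarith [sq_nonneg (Sx - μ * W)]
  have key2 : Q' = S' * W' := by
    rw [id2, hμ, hQ']; field_simp; ring
  have hQ'0 : 0 ≤ Q' := by rw [key2]; positivity
  have key4 : ρ * Q * W' ≤ Q' * W := by
    have h1 : ρ * Q * W' ≤ ρ * (S * W) * W' :=
      by nlinarith [mul_le_mul_of_nonneg_left key1 (by positivity : (0:ℝ) ≤ ρ * W')]
    have h2 : ρ * (S * W) * W' ≤ Q' * W := by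
      rw [key2]
      nlinarith [mul_le_mul_of_nonneg_right key3 (by positivity : (0:ℝ) ≤ W * W')]
    linarith
  rw [mul_div_assoc', div_le_div_iff₀ (by positivity) (by positivity)]
  calc ρ^2 * Q * W'^2 = (ρ * Q * W') * (ρ * W') := by ring
  _ ≤ (Q' * W) * (ρ * W') := mul_le_mul_of_nonneg_right key4 (by positivity)
  _ ≤ (Q' * W) * W := mul_le_mul_of_nonneg_left hWW' (by positivity)
  _ = Q' * W^2 := by ring

private lemma rayleigh_min {d : ℕ} (A : Matrix (Fin d) (Fin d) ℝ) (hA : A.IsHermitian)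
    (v : EuclideanSpace ℝ (Fin d)) (hd : 1 ≤ d) :
    (⨅ i, hA.eigenvalues i) * ‖v‖^2 ≤ v ⬝ᵥ A.mulVec v := by
  haveI : Nonempty (Fin d) := ⟨⟨0, hd⟩⟩
  set b := hA.eigenvectorBasis with hb
  set c : Fin d → ℝ := fun i => (b.repr v) i with hc
  have hcv : ∀ i, ⟪v, (b i : EuclideanSpace ℝ (Fin d))⟫ = c i := by
    intro i
    show ⟪v, b i⟫ = b.repr v i
    rw [b.repr_apply_apply]; exact real_inner_comm _ _
  have hcv' : ∀ i, ⟪(b i : EuclideanSpace ℝ (Fin d)), v⟫ = c i := by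
    intro i; show ⟪b i, v⟫ = b.repr v i; rw [b.repr_apply_apply]
  have hv : (∑ i, c i • b i) = v := b.sum_repr v
  have hAv : (WithLp.toLp 2 (A.mulVec v) : EuclideanSpace ℝ (Fin d)) = ∑ i, (c i * hA.eigenvalues i) • b i := by
    conv_lhs => rw [← hv]
    have h1 : A.mulVec (WithLp.ofLp (∑ i, c i • (b i : EuclideanSpace ℝ (Fin d))))
        = ∑ i, c i • (A.mulVec (b i)) := by
      simp [WithLp.ofLp_sum, Matrix.mulVec_sum, Matrix.mulVec_smul]
    rw [h1, WithLp.toLp_sum]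
    refine Finset.sum_congr rfl fun i _ => ?_
    rw [WithLp.toLp_smul, hA.mulVec_eigenvectorBasis, WithLp.toLp_smul, smul_smul, mul_comm]
  have key : v ⬝ᵥ A.mulVec v = ∑ i, hA.eigenvalues i * (c i)^2 := by
    have hdot : v ⬝ᵥ A.mulVec v = ⟪v, (WithLp.toLp 2 (A.mulVec v) : EuclideanSpace ℝ (Fin d))⟫ := by
      simp [PiLp.inner_apply, dotProduct, RCLike.inner_apply, mul_comm]
    rw [hdot, hAv, inner_sum]
    exact Finset.sum_congr rfl fun i _ => by rw [real_inner_smul_right, hcv]; ring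
  have hnorm : ‖v‖^2 = ∑ i, (c i)^2 := by
    have h := b.sum_inner_mul_inner v v
    simp only [← real_inner_self_eq_norm_sq, ← h]
    exact Finset.sum_congr rfl fun i _ => by rw [hcv, hcv']; ring
  rw [key, hnorm, Finset.mul_sum]
  apply Finset.sum_le_sum
  intro i _
  have h1 : (⨅ j, hA.eigenvalues j) ≤ hA.eigenvalues i :=
    ciInf_le (Set.Finite.bddBelow (Set.finite_range _)) i
  nlinarith [sq_nonneg (c i)]

private lemma sum_mulVec' {m d : ℕ} (M : Fin m → Matrix (Fin d) (Fin d) ℝ) (v : Fin d → ℝ) :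
    (∑ i, M i) *ᵥ v = ∑ i, M i *ᵥ v := by
  funext k
  simp only [Matrix.mulVec, Matrix.sum_apply, Finset.sum_apply, dotProduct, Finset.sum_mul]
  exact Finset.sum_comm

private lemma dotProduct_sum' {m d : ℕ} (v : Fin d → ℝ) (w : Fin m → (Fin d → ℝ)) :
    v ⬝ᵥ (∑ i, w i) = ∑ i, v ⬝ᵥ w i := by
  simp only [dotProduct, Finset.sum_apply, Finset.mul_sum]
  exact Finset.sum_comm

private lemma quad_rank_one {d : ℕ} (v u : EuclideanSpace ℝ (Fin d)) :
    (v : Fin d → ℝ) ⬝ᵥ (Matrix.of fun k l => u k * u l).mulVec v = ⟪v, u⟫ * ⟪v, u⟫ := by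
  simp only [PiLp.inner_apply, RCLike.inner_apply, starRingEnd_apply, star_trivial,
    dotProduct, Matrix.mulVec, Matrix.of_apply]
  rw [Finset.sum_mul]
  refine Finset.sum_congr rfl fun k _ => ?_
  rw [Finset.mul_sum, Finset.mul_sum]
  exact Finset.sum_congr rfl fun l _ => by ring

private lemma hasDerivAt_exp_inner {d : ℕ} (β₀ δ v : EuclideanSpace ℝ (Fin d)) (t : ℝ) :
    HasDerivAt (fun u : ℝ => Real.exp ⟪β₀ + u • δ, v⟫)
      (⟪δ, v⟫ * Real.exp ⟪β₀ + t • δ, v⟫) t := by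
  have hfe : (fun u : ℝ => Real.exp ⟪β₀ + u • δ, v⟫)
      = fun u => Real.exp (⟪β₀, v⟫ + u * ⟪δ, v⟫) := by
    funext u; rw [inner_add_left, real_inner_smul_left]
  rw [hfe]
  have h1 : HasDerivAt (fun u : ℝ => ⟪β₀, v⟫ + u * ⟪δ, v⟫) ⟪δ, v⟫ t := by
    simpa using (hasDerivAt_mul_const (⟪δ, v⟫ : ℝ)).const_add (⟪β₀, v⟫ : ℝ)
  have h2 := h1.exp
  rw [show ⟪β₀ + t • δ, v⟫ = ⟪β₀, v⟫ + t * ⟪δ, v⟫ by rw [inner_add_left, real_inner_smul_left]]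
  simpa [mul_comm] using h2

end AuxLemmas

namespace CoxLocal

open SurvData Matrix

variable {n d : ℕ}

noncomputable def Ef (D : SurvData n d) (β₀ δ : EuclideanSpace ℝ (Fin d)) (i : Fin n) (t : ℝ) : ℝ :=
  ∑ j, if D.T i ≤ D.T j then Real.exp ⟪β₀ + t • δ, D.Z j (D.T i)⟫ else 0

noncomputable def Ff (D : SurvData n d) (β₀ δ : EuclideanSpace ℝ (Fin d)) (i : Fin n) (t : ℝ) : ℝ :=
  ∑ j, if D.T i ≤ D.T j then ⟪δ, D.Z j (D.T i)⟫ * Real.exp ⟪β₀ + t • δ, D.Z j (D.T i)⟫ else 0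

noncomputable def Gf (D : SurvData n d) (β₀ δ : EuclideanSpace ℝ (Fin d)) (i : Fin n) (t : ℝ) : ℝ :=
  ∑ j, if D.T i ≤ D.T j then ⟪δ, D.Z j (D.T i)⟫^2 * Real.exp ⟪β₀ + t • δ, D.Z j (D.T i)⟫ else 0

noncomputable def qf (D : SurvData n d) (β₀ δ : EuclideanSpace ℝ (Fin d)) (i : Fin n) (t : ℝ) : ℝ :=
  (Gf D β₀ δ i t * Ef D β₀ δ i t - (Ff D β₀ δ i t)^2) / (Ef D β₀ δ i t)^2

lemma Ef_pos (D : SurvData n d) (β₀ δ : EuclideanSpace ℝ (Fin d)) (i : Fin n) (t : ℝ) :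
    0 < Ef D β₀ δ i t := by
  unfold Ef
  refine Finset.sum_pos' (fun j _ => ?_) ⟨i, Finset.mem_univ i, ?_⟩
  · split_ifs
    · exact (Real.exp_pos _).le
    · exact le_rfl
  · rw [if_pos le_rfl]
    exact Real.exp_pos _

lemma hasDerivAt_Ef (D : SurvData n d) (β₀ δ : EuclideanSpace ℝ (Fin d)) (i : Fin n) (t : ℝ) :
    HasDerivAt (fun u => Ef D β₀ δ i u) (Ff D β₀ δ i t) t := by
  unfold Ef Ff
  refine HasDerivAt.fun_sum fun j _ => ?_
  by_cases hij : D.T i ≤ D.T j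
  · simp only [if_pos hij]
    exact hasDerivAt_exp_inner β₀ δ _ t
  · simp only [if_neg hij]
    exact hasDerivAt_const t 0

lemma hasDerivAt_Ff (D : SurvData n d) (β₀ δ : EuclideanSpace ℝ (Fin d)) (i : Fin n) (t : ℝ) :
    HasDerivAt (fun u => Ff D β₀ δ i u) (Gf D β₀ δ i t) t := by
  unfold Ff Gf
  refine HasDerivAt.fun_sum fun j _ => ?_
  by_cases hij : D.T i ≤ D.T j
  · simp only [if_pos hij]
    have h := (hasDerivAt_exp_inner β₀ δ (D.Z j (D.T i)) t).const_mul
      (⟪δ, D.Z j (D.T i)⟫ : ℝ)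
    simpa [sq, mul_assoc, mul_comm, mul_left_comm] using h
  · simp only [if_neg hij]
    exact hasDerivAt_const t 0

lemma hasDerivAt_loglik (D : SurvData n d) (β₀ δ : EuclideanSpace ℝ (Fin d)) (t : ℝ) :
    HasDerivAt (fun u => D.loglik (β₀ + u • δ))
      ((n:ℝ)⁻¹ * ∑ i, if D.Δ i then ⟪δ, D.Z i (D.T i)⟫ - Ff D β₀ δ i t / Ef D β₀ δ i t else 0)
      t := by
  have hrepr : (fun u : ℝ => D.loglik (β₀ + u • δ))
      = fun u => (n:ℝ)⁻¹ * ∑ i, if D.Δ i then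
          (⟪β₀ + u • δ, D.Z i (D.T i)⟫ - Real.log (Ef D β₀ δ i u)) else 0 := rfl
  rw [hrepr]
  refine HasDerivAt.const_mul _ (HasDerivAt.fun_sum fun i _ => ?_)
  cases hΔ : D.Δ i
  · simp only [hΔ, Bool.false_eq_true, if_false]
    exact hasDerivAt_const t 0
  · simp only [hΔ, if_true]
    refine HasDerivAt.sub ?_ ?_
    · have h1 : (fun u : ℝ => ⟪β₀ + u • δ, D.Z i (D.T i)⟫)
          = fun u => ⟪β₀, D.Z i (D.T i)⟫ + u * ⟪δ, D.Z i (D.T i)⟫ := by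
        funext u; rw [inner_add_left, real_inner_smul_left]
      rw [h1]
      simpa using (hasDerivAt_mul_const (⟪δ, D.Z i (D.T i)⟫ : ℝ)).const_add
        (⟪β₀, D.Z i (D.T i)⟫ : ℝ)
    · exact (hasDerivAt_Ef D β₀ δ i t).log (Ef_pos D β₀ δ i t).ne'

lemma hasDerivAt_sfun (D : SurvData n d) (β₀ δ : EuclideanSpace ℝ (Fin d)) (t : ℝ) :
    HasDerivAt (fun u => (n:ℝ)⁻¹ * ∑ i,
        if D.Δ i then ⟪δ, D.Z i (D.T i)⟫ - Ff D β₀ δ i u / Ef D β₀ δ i u else 0)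
      (-((n:ℝ)⁻¹ * ∑ i, if D.Δ i then qf D β₀ δ i t else 0)) t := by
  have h : HasDerivAt (fun u => ∑ i,
      if D.Δ i then ⟪δ, D.Z i (D.T i)⟫ - Ff D β₀ δ i u / Ef D β₀ δ i u else 0)
      (∑ i, if D.Δ i then -(qf D β₀ δ i t) else 0) t := by
    refine HasDerivAt.fun_sum fun i _ => ?_
    cases hΔ : D.Δ i
    · simp only [hΔ, Bool.false_eq_true, if_false]
      exact hasDerivAt_const t 0
    · simp only [hΔ, if_true]
      have hdiv := (hasDerivAt_Ff D β₀ δ i t).div (hasDerivAt_Ef D β₀ δ i t)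
        (Ef_pos D β₀ δ i t).ne'
      have h2 := hdiv.const_sub (⟪δ, D.Z i (D.T i)⟫ : ℝ)
      have heq : -(qf D β₀ δ i t)
          = -((Gf D β₀ δ i t * Ef D β₀ δ i t - Ff D β₀ δ i t * Ff D β₀ δ i t)
              / (Ef D β₀ δ i t)^2) := by
        unfold qf; rw [sq (Ff D β₀ δ i t)]
      rw [heq]
      exact h2
  have h2 := h.const_mul ((n:ℝ)⁻¹)
  have heq : (n:ℝ)⁻¹ * (∑ i, if D.Δ i then -(qf D β₀ δ i t) else 0)
      = -((n:ℝ)⁻¹ * ∑ i, if D.Δ i then qf D β₀ δ i t else 0) := by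
    rw [← mul_neg, ← Finset.sum_neg_distrib]
    congr 1
    exact Finset.sum_congr rfl fun i _ => by split_ifs <;> simp
  rw [← heq]
  exact h2

lemma S0_eq (D : SurvData n d) (β₀ δ : EuclideanSpace ℝ (Fin d)) (i : Fin n) :
    D.S0 β₀ (D.T i) = (n:ℝ)⁻¹ * Ef D β₀ δ i 0 := by
  unfold SurvData.S0 Ef
  congr 1
  exact Finset.sum_congr rfl fun j _ => by split_ifs <;> simp

lemma zbar_pair (D : SurvData n d) (β₀ δ : EuclideanSpace ℝ (Fin d)) (i : Fin n)
    (hn0 : (n:ℝ) ≠ 0) :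
    ⟪δ, D.Zbar β₀ (D.T i)⟫ = Ff D β₀ δ i 0 / Ef D β₀ δ i 0 := by
  rw [SurvData.Zbar, real_inner_smul_right, SurvData.S1, real_inner_smul_right, inner_sum]
  have hF : (∑ j, ⟪δ, (if D.T i ≤ D.T j then
      Real.exp ⟪β₀, D.Z j (D.T i)⟫ • D.Z j (D.T i) else 0 : EuclideanSpace ℝ (Fin d))⟫)
      = Ff D β₀ δ i 0 := by
    unfold Ff
    refine Finset.sum_congr rfl fun j _ => ?_
    split_ifs
    · rw [real_inner_smul_right]
      simp [mul_comm]
    · simp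
  rw [hF, S0_eq D β₀ δ i]
  have hE := Ef_pos D β₀ δ i 0
  field_simp


lemma score_pair (D : SurvData n d) (β₀ δ : EuclideanSpace ℝ (Fin d)) (hn0 : (n:ℝ) ≠ 0) :
    ⟪D.score β₀, δ⟫ = (n:ℝ)⁻¹ * ∑ i,
      if D.Δ i then ⟪δ, D.Z i (D.T i)⟫ - Ff D β₀ δ i 0 / Ef D β₀ δ i 0 else 0 := by
  rw [SurvData.score, real_inner_smul_left, sum_inner]
  congr 1
  refine Finset.sum_congr rfl fun i _ => ?_
  cases hΔ : D.Δ i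
  · simp only [hΔ, Bool.false_eq_true, if_false, inner_zero_left]
  · simp only [hΔ, if_true]
    rw [inner_sub_left]
    congr 1
    · exact real_inner_comm _ _
    · rw [real_inner_comm]
      exact zbar_pair D β₀ δ i hn0

lemma quad_eq (D : SurvData n d) (β₀ δ : EuclideanSpace ℝ (Fin d)) (hn0 : (n:ℝ) ≠ 0) :
    (δ : Fin d → ℝ) ⬝ᵥ (D.infoMat β₀).mulVec δ
      = (n:ℝ)⁻¹ * ∑ i, if D.Δ i then qf D β₀ δ i 0 else 0 := by
  rw [SurvData.infoMat, Matrix.smul_mulVec, dotProduct_smul, sum_mulVec',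
    dotProduct_sum', smul_eq_mul]
  congr 1
  refine Finset.sum_congr rfl fun i _ => ?_
  cases hΔ : D.Δ i
  · simp only [hΔ, Bool.false_eq_true, if_false, Matrix.zero_mulVec, dotProduct_zero]
  · simp only [hΔ, if_true]
    rw [SurvData.Vmat, Matrix.sub_mulVec, dotProduct_sub, Matrix.smul_mulVec,
      dotProduct_smul, quad_rank_one]
    have hS2 : (δ : Fin d → ℝ) ⬝ᵥ (D.S2mat β₀ (D.T i)).mulVec δ
        = (n:ℝ)⁻¹ * Gf D β₀ δ i 0 := by
      rw [SurvData.S2mat, Matrix.smul_mulVec, dotProduct_smul, sum_mulVec',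
        dotProduct_sum', smul_eq_mul]
      congr 1
      unfold Gf
      refine Finset.sum_congr rfl fun j _ => ?_
      split_ifs with hij
      · rw [Matrix.smul_mulVec, dotProduct_smul, quad_rank_one, smul_eq_mul]
        have : (β₀ + (0:ℝ) • δ) = β₀ := by simp
        rw [this, sq]
        ring
      · simp
    rw [hS2, S0_eq D β₀ δ i, zbar_pair D β₀ δ i hn0]
    unfold qf
    have hE := Ef_pos D β₀ δ i 0
    rw [smul_eq_mul]
    field_simp

lemma qf_nonneg (D : SurvData n d) (β₀ δ : EuclideanSpace ℝ (Fin d)) (i : Fin n) (t : ℝ) :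
    0 ≤ qf D β₀ δ i t := by
  unfold qf
  apply div_nonneg _ (sq_nonneg _)
  rw [sub_nonneg]
  set w : Fin n → ℝ := fun j =>
    if D.T i ≤ D.T j then Real.exp ⟪β₀ + t • δ, D.Z j (D.T i)⟫ else 0 with hw
  set x : Fin n → ℝ := fun j => ⟪δ, D.Z j (D.T i)⟫ with hx
  have hwnn : ∀ j, 0 ≤ w j := fun j => by
    rw [hw]; dsimp only; split_ifs
    · exact (Real.exp_pos _).le
    · exact le_rfl
  have hFr : Ff D β₀ δ i t = ∑ j, x j * w j := by
    unfold Ff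
    exact Finset.sum_congr rfl fun j _ => by rw [hw, hx]; dsimp only; split_ifs <;> simp
  have hGr : Gf D β₀ δ i t = ∑ j, (x j)^2 * w j := by
    unfold Gf
    exact Finset.sum_congr rfl fun j _ => by rw [hw, hx]; dsimp only; split_ifs <;> simp
  have hEr : Ef D β₀ δ i t = ∑ j, w j := rfl
  rw [hFr, hGr, hEr]
  exact sum_sq_cauchy w x hwnn

lemma qf_comp (D : SurvData n d) (β₀ δ : EuclideanSpace ℝ (Fin d)) (i : Fin n)
    (CZ : ℝ) (hCZ : 0 < CZ) (hT : D.valid) (hZ : D.covBound CZ)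
    {t : ℝ} (ht : 0 ≤ t) (hlog : t * (CZ * ‖δ‖) + t * (CZ * ‖δ‖) ≤ Real.log 2) :
    (1/2 : ℝ) * qf D β₀ δ i 0 ≤ qf D β₀ δ i t := by
  set a := t * (CZ * ‖δ‖) with ha
  have ha0 : 0 ≤ a := by positivity
  set ρ := Real.exp (-a) with hρdef
  have hρ : 0 < ρ := Real.exp_pos _
  set w : Fin n → ℝ := fun j =>
    if D.T i ≤ D.T j then Real.exp ⟪β₀ + (0:ℝ) • δ, D.Z j (D.T i)⟫ else 0 with hw
  set w' : Fin n → ℝ := fun j =>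
    if D.T i ≤ D.T j then Real.exp ⟪β₀ + t • δ, D.Z j (D.T i)⟫ else 0 with hw'
  set x : Fin n → ℝ := fun j => ⟪δ, D.Z j (D.T i)⟫ with hx
  have hxb : ∀ j, |x j| ≤ CZ * ‖δ‖ := fun j => by
    rw [hx]; dsimp only
    calc |⟪δ, D.Z j (D.T i)⟫| ≤ ‖δ‖ * ‖D.Z j (D.T i)‖ := abs_real_inner_le_norm _ _
    _ ≤ ‖δ‖ * CZ := mul_le_mul_of_nonneg_left (hZ j _ (hT i)) (norm_nonneg _)
    _ = CZ * ‖δ‖ := mul_comm _ _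
  have hwnn : ∀ j, 0 ≤ w j := fun j => by
    rw [hw]; dsimp only; split_ifs
    · exact (Real.exp_pos _).le
    · exact le_rfl
  have hWpos : 0 < ∑ j, w j := Ef_pos D β₀ δ i 0
  have hsplit : ∀ j, w' j = w j * Real.exp (t * x j) := fun j => by
    rw [hw, hw', hx]; dsimp only
    split_ifs
    · rw [← Real.exp_add]
      congr 1
      rw [inner_add_left, inner_add_left, real_inner_smul_left, real_inner_smul_left]
      ring
    · simp
  have hlow : ∀ j, ρ * w j ≤ w' j := fun j => by
    rw [hsplit j, hρdef, mul_comm (w j)]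
    refine mul_le_mul_of_nonneg_right (Real.exp_le_exp.2 ?_) (hwnn j)
    have h1 := abs_le.1 (hxb j)
    nlinarith [h1.1]
  have hhigh : ∀ j, w' j ≤ ρ⁻¹ * w j := fun j => by
    rw [hsplit j, hρdef, ← Real.exp_neg, neg_neg, mul_comm (w j)]
    refine mul_le_mul_of_nonneg_right (Real.exp_le_exp.2 ?_) (hwnn j)
    have h1 := abs_le.1 (hxb j)
    nlinarith [h1.2]
  have hvc := var_comp w w' x ρ hρ hwnn hWpos hlow hhigh
  have hFr : ∀ s (ws : Fin n → ℝ), (∀ j, ws j =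
      if D.T i ≤ D.T j then Real.exp ⟪β₀ + s • δ, D.Z j (D.T i)⟫ else 0) →
      Ff D β₀ δ i s = ∑ j, x j * ws j := by
    intro s ws hws
    unfold Ff
    refine Finset.sum_congr rfl fun j _ => ?_
    rw [hws j, hx]; dsimp only; split_ifs <;> simp
  have hGr : ∀ s (ws : Fin n → ℝ), (∀ j, ws j =
      if D.T i ≤ D.T j then Real.exp ⟪β₀ + s • δ, D.Z j (D.T i)⟫ else 0) →
      Gf D β₀ δ i s = ∑ j, (x j)^2 * ws j := by
    intro s ws hws
    unfold Gf
    refine Finset.sum_congr rfl fun j _ => ?_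
    rw [hws j, hx]; dsimp only; split_ifs <;> simp
  have e1 : Ef D β₀ δ i 0 = ∑ j, w j := rfl
  have e2 : Ef D β₀ δ i t = ∑ j, w' j := rfl
  have e3 : Ff D β₀ δ i 0 = ∑ j, x j * w j := hFr 0 w fun j => rfl
  have e4 : Ff D β₀ δ i t = ∑ j, x j * w' j := hFr t w' fun j => rfl
  have e5 : Gf D β₀ δ i 0 = ∑ j, (x j)^2 * w j := hGr 0 w fun j => rfl
  have e6 : Gf D β₀ δ i t = ∑ j, (x j)^2 * w' j := hGr t w' fun j => rfl
  have hq0' : qf D β₀ δ i 0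
      = ((∑ j, (x j)^2 * w j) * (∑ j, w j) - (∑ j, x j * w j)^2) / (∑ j, w j)^2 := by
    unfold qf; rw [e1, e3, e5]
  have hqt' : qf D β₀ δ i t
      = ((∑ j, (x j)^2 * w' j) * (∑ j, w' j) - (∑ j, x j * w' j)^2) / (∑ j, w' j)^2 := by
    unfold qf; rw [e2, e4, e6]
  rw [hq0', hqt']
  have hρ2 : (1/2 : ℝ) ≤ ρ^2 := by
    have : ρ^2 = Real.exp (-a + -a) := by rw [Real.exp_add, hρdef, sq]
    rw [this]
    calc (1/2 : ℝ) = Real.exp (-(Real.log 2)) := by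
          rw [Real.exp_neg, Real.exp_log] <;> norm_num
    _ ≤ Real.exp (-a + -a) := Real.exp_le_exp.2 (by linarith)
  have h0 := qf_nonneg D β₀ δ i 0
  rw [hq0'] at h0
  calc (1/2 : ℝ) * _ ≤ ρ^2 * (((∑ j, (x j)^2 * w j) * (∑ j, w j) - (∑ j, x j * w j)^2)
        / (∑ j, w j)^2) := mul_le_mul_of_nonneg_right hρ2 h0
  _ ≤ _ := hvc

end CoxLocal
/-- Deterministic localization of the constrained maximum partial-likelihood
estimator (key step in the proof of Lemma B.2): if `β̂` maximizes `ℓ(·;D)` over the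
closed ball `B̄(0, C_β)` containing `β₀`, `λ = λ_min(H(β₀;D)) > 0` and
`‖ℓ̇(β₀;D)‖₂/λ < log 2 / (4 C_Z)`, then `‖β̂ − β₀‖₂ ≤ 2‖ℓ̇(β₀;D)‖₂/λ`. -/
theorem cox_mple_localization (CZ Cβ : ℝ) (hCZ : 0 < CZ) (hCβ : 0 < Cβ)
    {n d : ℕ} (hn : 2 ≤ n) (hd : 1 ≤ d)
    (D : SurvData n d) (hT : D.valid) (hZ : D.covBound CZ)
    (β₀ βhat : EuclideanSpace ℝ (Fin d))
    (hβ₀ : ‖β₀‖ ≤ Cβ) (hβhat : βhat ∈ Metric.closedBall (0 : EuclideanSpace ℝ (Fin d)) Cβ)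
    (hmax : ∀ β ∈ Metric.closedBall (0 : EuclideanSpace ℝ (Fin d)) Cβ,
      D.loglik β ≤ D.loglik βhat)
    (hH : (D.infoMat β₀).IsHermitian)
    (lam : ℝ) (hlam_def : lam = ⨅ i : Fin d, hH.eigenvalues i)
    (hlam : 0 < lam)
    (hratio : ‖D.score β₀‖ / lam < Real.log 2 / (4 * CZ)) :
    ‖βhat - β₀‖ ≤ 2 * ‖D.score β₀‖ / lam := by
  classical
  by_contra hcon
  push_neg at hcon
  set δ : EuclideanSpace ℝ (Fin d) := βhat - β₀ with hδdef
  set g : ℝ := ‖D.score β₀‖ with hgdef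
  have hg0 : 0 ≤ g := norm_nonneg _
  clear_value g
  have h2g0 : 0 ≤ 2 * g / lam := div_nonneg (by linarith) hlam.le
  have hδpos : 0 < ‖δ‖ := lt_of_le_of_lt h2g0 hcon
  have hlog2 : (0:ℝ) < Real.log 2 := Real.log_pos (by norm_num)
  have hnR : (0:ℝ) < (n:ℝ) := by
    have h : 0 < n := lt_of_lt_of_le (by norm_num) hn
    exact_mod_cast h
  have hn0 : (n:ℝ) ≠ 0 := hnR.ne'
  -- radii
  have hr₀log : 2 * g / lam < Real.log 2 / (2 * CZ) := by
    have h1 : 2 * (g / lam) < 2 * (Real.log 2 / (4 * CZ)) := by linarith [hratio]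
    calc 2 * g / lam = 2 * (g / lam) := by ring
    _ < 2 * (Real.log 2 / (4 * CZ)) := h1
    _ = Real.log 2 / (2 * CZ) := by field_simp; ring
  set m := min ‖δ‖ (Real.log 2 / (2 * CZ)) with hmdef
  have hr₀m : 2 * g / lam < m := lt_min hcon hr₀log
  set r := (2 * g / lam + m) / 2 with hrdef
  have hr1 : 2 * g / lam < r := by rw [hrdef]; linarith
  have hrpos : 0 < r := lt_of_le_of_lt h2g0 hr1
  have hrm : r < m := by rw [hrdef]; linarith
  have hr2 : r < ‖δ‖ := lt_of_lt_of_le hrm (min_le_left _ _)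
  have hr3 : 2 * CZ * r ≤ Real.log 2 := by
    have h : r < Real.log 2 / (2 * CZ) := lt_of_lt_of_le hrm (min_le_right _ _)
    rw [lt_div_iff₀ (by positivity)] at h
    nlinarith
  set tstar := r / ‖δ‖ with htdef
  have ht0 : 0 < tstar := div_pos hrpos hδpos
  have ht1 : tstar < 1 := (div_lt_one hδpos).2 hr2
  have htr : tstar * ‖δ‖ = r := div_mul_cancel₀ r hδpos.ne'
  clear_value m r tstar
  -- the directional derivative functions
  set sfun : ℝ → ℝ := fun t => (n:ℝ)⁻¹ * ∑ i,
    if D.Δ i then ⟪δ, D.Z i (D.T i)⟫ - CoxLocal.Ff D β₀ δ i t / CoxLocal.Ef D β₀ δ i t else 0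
    with hsfun
  set qfun : ℝ → ℝ := fun t => (n:ℝ)⁻¹ * ∑ i,
    if D.Δ i then CoxLocal.qf D β₀ δ i t else 0 with hqfun
  have hL' : ∀ t : ℝ, HasDerivAt (fun u => D.loglik (β₀ + u • δ)) (sfun t) t :=
    fun t => CoxLocal.hasDerivAt_loglik D β₀ δ t
  have hs' : ∀ t : ℝ, HasDerivAt sfun (-(qfun t)) t :=
    fun t => CoxLocal.hasDerivAt_sfun D β₀ δ t
  have hq_nonneg : ∀ t : ℝ, 0 ≤ qfun t := fun t => by
    rw [hqfun]
    refine mul_nonneg (by positivity) (Finset.sum_nonneg fun i _ => ?_)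
    split_ifs
    · exact CoxLocal.qf_nonneg D β₀ δ i t
    · exact le_rfl
  -- comparison
  have hqcomp : ∀ t : ℝ, 0 ≤ t → t ≤ tstar → (1/2 : ℝ) * qfun 0 ≤ qfun t := by
    intro t h0t httstar
    have hmul : (1/2 : ℝ) * qfun 0
        = (n:ℝ)⁻¹ * ∑ i, (1/2 : ℝ) * (if D.Δ i then CoxLocal.qf D β₀ δ i 0 else 0) := by
      rw [hqfun, ← Finset.mul_sum]
      ring
    rw [hmul, hqfun]
    refine mul_le_mul_of_nonneg_left (Finset.sum_le_sum fun i _ => ?_) (by positivity)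
    split_ifs
    · refine CoxLocal.qf_comp D β₀ δ i CZ hCZ hT hZ h0t ?_
      have h1 : t * (CZ * ‖δ‖) ≤ tstar * (CZ * ‖δ‖) :=
        mul_le_mul_of_nonneg_right httstar (by positivity)
      have h2 : tstar * (CZ * ‖δ‖) = CZ * r := by
        rw [← htr]; ring
      nlinarith
    · simp
  -- score identity and bound
  have hsc0 : sfun 0 = ⟪D.score β₀, δ⟫ := (CoxLocal.score_pair D β₀ δ hn0).symm
  have hscb : sfun 0 ≤ g * ‖δ‖ := by
    rw [hsc0, hgdef]
    exact real_inner_le_norm _ _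
  -- quadratic lower bound
  have hquad : lam * ‖δ‖^2 ≤ qfun 0 := by
    have h1 := rayleigh_min (D.infoMat β₀) hH δ hd
    rw [CoxLocal.quad_eq D β₀ δ hn0] at h1
    calc lam * ‖δ‖^2 = (⨅ i, hH.eigenvalues i) * ‖δ‖^2 := by rw [hlam_def]
    _ ≤ (n:ℝ)⁻¹ * ∑ i, if D.Δ i then CoxLocal.qf D β₀ δ i 0 else 0 := h1
    _ = qfun 0 := by rw [hqfun]
  clear_value sfun qfun
  -- segment stays in the ball
  have hβ₀mem : β₀ ∈ Metric.closedBall (0 : EuclideanSpace ℝ (Fin d)) Cβ := by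
    rw [Metric.mem_closedBall, dist_zero_right]
    exact hβ₀
  have hseg : ∀ t : ℝ, 0 ≤ t → t ≤ 1 →
      β₀ + t • δ ∈ Metric.closedBall (0 : EuclideanSpace ℝ (Fin d)) Cβ := by
    intro t h0t ht1'
    have hcomb : β₀ + t • δ = (1 - t) • β₀ + t • βhat := by
      rw [hδdef, smul_sub, sub_smul, one_smul]
      abel
    rw [hcomb]
    exact convex_closedBall (0 : EuclideanSpace ℝ (Fin d)) Cβ hβ₀mem hβhat
      (by linarith) h0t (by ring)
  have hL1 : D.loglik (β₀ + (1:ℝ) • δ) = D.loglik βhat := by rw [hδdef]; simp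
  -- MVT on [tstar, 1]
  obtain ⟨c, hc, hceq⟩ := exists_hasDerivAt_eq_slope (fun u => D.loglik (β₀ + u • δ)) sfun ht1
    (fun x _ => (hL' x).continuousAt.continuousWithinAt) (fun x _ => hL' x)
  have hsc : 0 ≤ sfun c := by
    rw [hceq]
    apply div_nonneg _ (by linarith : (0:ℝ) ≤ 1 - tstar)
    rw [hL1, sub_nonneg]
    exact hmax _ (hseg tstar ht0.le ht1.le)
  -- sfun tstar ≥ sfun c ≥ 0 by MVT on [tstar, c]
  have hst : 0 ≤ sfun tstar := by
    obtain ⟨c₂, hc₂, hceq₂⟩ := exists_hasDerivAt_eq_slope sfun (fun t => -(qfun t)) hc.1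
      (fun x _ => (hs' x).continuousAt.continuousWithinAt) (fun x _ => hs' x)
    have hpos : (0:ℝ) < c - tstar := by linarith [hc.1]
    rw [eq_div_iff hpos.ne'] at hceq₂
    have hq2 := hq_nonneg c₂
    linarith [mul_nonneg hq2 (le_of_lt hpos)]
  -- MVT on [0, tstar]
  obtain ⟨c₁, hc₁, hceq₁⟩ := exists_hasDerivAt_eq_slope sfun (fun t => -(qfun t)) ht0
    (fun x _ => (hs' x).continuousAt.continuousWithinAt) (fun x _ => hs' x)
  rw [sub_zero, eq_div_iff ht0.ne'] at hceq₁
  have hkey : sfun 0 = sfun tstar + qfun c₁ * tstar := by linarith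
  have hqc₁ : (1/2:ℝ) * qfun 0 ≤ qfun c₁ := hqcomp c₁ hc₁.1.le hc₁.2.le
  -- final arithmetic
  have hfin1 : lam * ‖δ‖^2 / 2 * tstar ≤ sfun 0 := by
    have h : lam * ‖δ‖^2 / 2 ≤ qfun c₁ := by linarith
    calc lam * ‖δ‖^2 / 2 * tstar ≤ qfun c₁ * tstar :=
      mul_le_mul_of_nonneg_right h ht0.le
    _ ≤ sfun tstar + qfun c₁ * tstar := by linarith
    _ = sfun 0 := hkey.symm
  have hfin2 : lam * ‖δ‖^2 / 2 * tstar = lam * ‖δ‖ * r / 2 := by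
    rw [← htr]; ring
  have hbig : lam * ‖δ‖ * r / 2 ≤ g * ‖δ‖ := by
    rw [← hfin2]; exact le_trans hfin1 hscb
  have hfin3 : lam * r / 2 ≤ g := by
    by_contra hx
    push_neg at hx
    have h2 := mul_lt_mul_of_pos_right hx hδpos
    have h3 : lam * r / 2 * ‖δ‖ = lam * ‖δ‖ * r / 2 := by ring
    linarith
  have hlast : 2 * g < lam * r := by
    have h := (div_lt_iff₀ hlam).1 hr1
    linarith
  linarith
end
end

section
/- Sensitivity of the truncated Breslow tree levels (privacy step in the proof of Theorem 4.1): Fix n ≥ 2, d ≥ 1, a truncation level c > 0, a vector β̂ ∈ ℝ^d, a level l ∈ ℕ, and C_Z > 0. For a survival dataset D of size n and m ∈ {1,…,2^l} define x_m(D) := n⁻¹ Σ_{i : Δ_i = 1, (m−1)·2^{−l} ≤ T_i < m·2^{−l}} 1 / max(c, S⁰(T_i, β̂; D)). Then for every pair of neighbouring survival datasets D, D' of size n that both satisfy the covariate bound C_Z, Σ_{m=1}^{2^l} (x_m(D) − x_m(D'))² ≤ 2 e^{2 C_Z ‖β̂‖₂} / (c⁴ n²) + 4 / (c² n²). -/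
open scoped BigOperators
open MeasureTheory Real
open scoped RealInnerProductSpace
noncomputable section

namespace SurvData

variable {n d : ℕ}

/-- Level-`l` entries of the binary-tree representation of the truncated Breslow
estimator: `x_m(D) = n⁻¹ Σ_{i : Δ_i = 1, (m−1)2^{−l} ≤ T_i < m 2^{−l}}
1/max(c, S⁰(T_i, β̂; D))`. -/
def treeLevel (D : SurvData n d) (βhat : EuclideanSpace ℝ (Fin d)) (c : ℝ)
    (l m : ℕ) : ℝ :=
  (n : ℝ)⁻¹ * ∑ i, if D.Δ i ∧ ((m : ℝ) - 1) / 2 ^ l ≤ D.T i ∧ D.T i < (m : ℝ) / 2 ^ l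
    then (max c (D.S0 βhat (D.T i)))⁻¹ else 0

end SurvData

/-- Each bin at level `l` contains a given time `T` for at most one index `m`. -/
lemma bin_unique (l : ℕ) (T : ℝ) {a b : ℕ}
    (ha1 : ((a : ℝ) - 1) / 2 ^ l ≤ T) (ha2 : T < (a : ℝ) / 2 ^ l)
    (hb1 : ((b : ℝ) - 1) / 2 ^ l ≤ T) (hb2 : T < (b : ℝ) / 2 ^ l) : a = b := by
  have h2 : (0 : ℝ) < 2 ^ l := by positivity
  have hab : (a : ℝ) - 1 < b := by
    have h := lt_of_le_of_lt ha1 hb2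
    rw [div_lt_div_iff₀ h2 h2] at h
    nlinarith
  have hba : (b : ℝ) - 1 < a := by
    have h := lt_of_le_of_lt hb1 ha2
    rw [div_lt_div_iff₀ h2 h2] at h
    nlinarith
  have h1 : a < b + 1 := by exact_mod_cast show (a : ℝ) < b + 1 by linarith
  have h2' : b < a + 1 := by exact_mod_cast show (b : ℝ) < a + 1 by linarith
  omega

/-- Sum of an indicator of a predicate satisfied by at most one element is `≤ 1`. -/
lemma indicator_sum_le_one {s : Finset ℕ} (Q : ℕ → Prop) [DecidablePred Q]
    (huniq : ∀ a ∈ s, ∀ b ∈ s, Q a → Q b → a = b) :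
    ∑ m ∈ s, (if Q m then (1 : ℝ) else 0) ≤ 1 := by
  by_cases h : ∃ m0 ∈ s, Q m0
  · obtain ⟨m0, hm0s, hm0⟩ := h
    rw [Finset.sum_eq_single m0
      (fun b hb hne => by
        simp only [ite_eq_right_iff]
        intro hQb
        exact absurd (huniq b hb m0 hm0s hQb hm0) hne)
      (fun h => absurd hm0s h)]
    simp [hm0]
  · push_neg at h
    rw [Finset.sum_eq_zero (fun m hm => by simp [h m hm])]
    norm_num

/-- Sensitivity of the truncated Breslow tree levels (privacy step in the proof of
Theorem 4.1): for neighbouring datasets `D, D'` with covariate bound `C_Z`,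
`Σ_{m=1}^{2^l} (x_m(D) − x_m(D'))² ≤ 2 e^{2 C_Z ‖β̂‖}/(c⁴ n²) + 4/(c² n²)`. -/
theorem breslow_tree_sensitivity (CZ c : ℝ) (hCZ : 0 < CZ) (hc : 0 < c)
    {n d : ℕ} (hn : 2 ≤ n) (βhat : EuclideanSpace ℝ (Fin d)) (l : ℕ)
    (D D' : SurvData n d) (hT : D.valid) (hT' : D'.valid)
    (hZ : D.covBound CZ) (hZ' : D'.covBound CZ)
    (hnb : SurvData.Neighbor D D') :
    ∑ m ∈ Finset.Icc 1 (2 ^ l),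
        (D.treeLevel βhat c l m - D'.treeLevel βhat c l m) ^ 2 ≤
      2 * Real.exp (2 * CZ * ‖βhat‖) / (c ^ 4 * n ^ 2) + 4 / (c ^ 2 * n ^ 2) := by
  classical
  obtain ⟨i0, hi0⟩ := hnb
  have hn0 : (0 : ℝ) < n := by positivity
  set M : ℝ := Real.exp (CZ * ‖βhat‖) with hMdef
  have hM0 : 0 < M := Real.exp_pos _
  -- bounds on the summands of S0
  have hterm : ∀ (E : SurvData n d), E.covBound CZ → ∀ t ∈ Set.Icc (0:ℝ) 1, ∀ j : Fin n,
      (if t ≤ E.T j then Real.exp ⟪βhat, E.Z j t⟫ else 0) ∈ Set.Icc (0:ℝ) M := by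
    intro E hE t ht j
    split
    · refine ⟨le_of_lt (Real.exp_pos _), Real.exp_le_exp.mpr ?_⟩
      calc ⟪βhat, E.Z j t⟫ ≤ ‖βhat‖ * ‖E.Z j t‖ := real_inner_le_norm _ _
        _ ≤ ‖βhat‖ * CZ := mul_le_mul_of_nonneg_left (hE j t ht) (norm_nonneg _)
        _ = CZ * ‖βhat‖ := mul_comm _ _
    · exact ⟨le_refl _, le_of_lt hM0⟩
  -- difference of S0's
  have hS0diff : ∀ t ∈ Set.Icc (0:ℝ) 1, |D.S0 βhat t - D'.S0 βhat t| ≤ M / n := by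
    intro t ht
    unfold SurvData.S0
    rw [← mul_sub, ← Finset.sum_sub_distrib]
    rw [Finset.sum_eq_single i0 (fun j _ hj => by
        obtain ⟨h1, _, h3⟩ := hi0 j hj
        rw [h1, h3]; ring)
      (fun h => absurd (Finset.mem_univ i0) h)]
    rw [abs_mul, abs_of_nonneg (by positivity : (0:ℝ) ≤ (n:ℝ)⁻¹)]
    rw [div_eq_inv_mul]
    gcongr (n:ℝ)⁻¹ * ?_
    have h1 := hterm D hZ t ht i0
    have h2 := hterm D' hZ' t ht i0
    rw [abs_sub_le_iff]
    constructor <;> [linarith [h1.1, h1.2, h2.1, h2.2]; linarith [h1.1, h1.2, h2.1, h2.2]]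
  -- truncated inverses
  set g : ℝ → ℝ := fun t => (max c (D.S0 βhat t))⁻¹ with hgdef
  set g' : ℝ → ℝ := fun t => (max c (D'.S0 βhat t))⁻¹ with hg'def
  have hgpos : ∀ t, 0 < max c (D.S0 βhat t) := fun t => lt_of_lt_of_le hc (le_max_left _ _)
  have hg'pos : ∀ t, 0 < max c (D'.S0 βhat t) := fun t => lt_of_lt_of_le hc (le_max_left _ _)
  have hgle : ∀ t, g t ≤ c⁻¹ := fun t => inv_anti₀ hc (le_max_left _ _)
  have hg'le : ∀ t, g' t ≤ c⁻¹ := fun t => inv_anti₀ hc (le_max_left _ _)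
  have hgnn : ∀ t, 0 ≤ g t := fun t => le_of_lt (inv_pos.mpr (hgpos t))
  have hg'nn : ∀ t, 0 ≤ g' t := fun t => le_of_lt (inv_pos.mpr (hg'pos t))
  set K : ℝ := M / (c ^ 2 * n) with hKdef
  have hK0 : 0 < K := by positivity
  have hgg' : ∀ t ∈ Set.Icc (0:ℝ) 1, |g t - g' t| ≤ K := by
    intro t ht
    have hmax : |max c (D.S0 βhat t) - max c (D'.S0 βhat t)| ≤ M / n := by
      rw [max_comm c (D.S0 βhat t), max_comm c (D'.S0 βhat t)]
      exact le_trans (abs_max_sub_max_le_abs _ _ _) (hS0diff t ht)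
    have h1 := hgpos t
    have h2 := hg'pos t
    have heq : g t - g' t = (max c (D'.S0 βhat t) - max c (D.S0 βhat t)) /
        (max c (D.S0 βhat t) * max c (D'.S0 βhat t)) := by
      simp only [hgdef, hg'def]; exact inv_sub_inv h1.ne' h2.ne'
    rw [heq, abs_div, abs_of_pos (mul_pos h1 h2), abs_sub_comm]
    rw [div_le_iff₀ (mul_pos h1 h2), hKdef]
    calc |max c (D.S0 βhat t) - max c (D'.S0 βhat t)| ≤ M / n := hmax
      _ = M / (c ^ 2 * n) * (c * c) := by field_simp
      _ ≤ M / (c ^ 2 * n) * (max c (D.S0 βhat t) * max c (D'.S0 βhat t)) := by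
          apply mul_le_mul_of_nonneg_left _ (by positivity)
          apply mul_le_mul (le_max_left _ _) (le_max_left _ _) (le_of_lt hc) (le_of_lt h1)
  -- bin conditions
  set C : Fin n → ℕ → Prop := fun i m =>
    D.Δ i ∧ ((m : ℝ) - 1) / 2 ^ l ≤ D.T i ∧ D.T i < (m : ℝ) / 2 ^ l with hCdef
  set C' : Fin n → ℕ → Prop := fun i m =>
    D'.Δ i ∧ ((m : ℝ) - 1) / 2 ^ l ≤ D'.T i ∧ D'.T i < (m : ℝ) / 2 ^ l with hC'def
  have hCC' : ∀ i, i ≠ i0 → ∀ m, C i m ↔ C' i m := by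
    intro i hi m
    obtain ⟨h1, h2, _⟩ := hi0 i hi
    rw [hCdef, hC'def]; simp only [h1, h2]
  -- decomposition
  set A : ℕ → ℝ := fun m =>
    (n : ℝ)⁻¹ * ∑ i ∈ Finset.univ.erase i0, (if C i m then g (D.T i) - g' (D.T i) else 0)
    with hAdef
  set B : ℕ → ℝ := fun m =>
    (n : ℝ)⁻¹ * ((if C i0 m then g (D.T i0) else 0) - (if C' i0 m then g' (D'.T i0) else 0))
    with hBdef
  have hsplit : ∀ m, D.treeLevel βhat c l m - D'.treeLevel βhat c l m = A m + B m := by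
    intro m
    unfold SurvData.treeLevel
    rw [← mul_sub, ← Finset.sum_sub_distrib]
    rw [← Finset.sum_erase_add _ _ (Finset.mem_univ i0)]
    rw [hAdef, hBdef]
    rw [mul_add]
    congr 1
    congr 1
    apply Finset.sum_congr rfl
    intro i hi
    have hine : i ≠ i0 := Finset.ne_of_mem_erase hi
    obtain ⟨h1, h2, _⟩ := hi0 i hine
    have hCiff := hCC' i hine m
    by_cases hci : C i m
    · have hciD : D.Δ i = true ∧ ((m : ℝ) - 1) / 2 ^ l ≤ D.T i ∧ D.T i < (m : ℝ) / 2 ^ l := hci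
      have hciD' : D'.Δ i = true ∧ ((m : ℝ) - 1) / 2 ^ l ≤ D'.T i ∧ D'.T i < (m : ℝ) / 2 ^ l :=
        hCiff.mp hci
      rw [if_pos hciD, if_pos hciD', if_pos hci]
      simp only [hgdef, hg'def, h1]
    · have hciD : ¬(D.Δ i = true ∧ ((m : ℝ) - 1) / 2 ^ l ≤ D.T i ∧ D.T i < (m : ℝ) / 2 ^ l) := hci
      have hciD' : ¬(D'.Δ i = true ∧ ((m : ℝ) - 1) / 2 ^ l ≤ D'.T i ∧ D'.T i < (m : ℝ) / 2 ^ l) :=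
        fun h => hci (hCiff.mpr h)
      rw [if_neg hciD, if_neg hciD', if_neg hci]
      ring
  -- indicator count for i ≠ i0
  set N : ℕ → ℝ := fun m =>
    ∑ i ∈ Finset.univ.erase i0, (if C i m then (1:ℝ) else 0) with hNdef
  have hNnn : ∀ m, 0 ≤ N m := by
    intro m; rw [hNdef]
    apply Finset.sum_nonneg; intro i _; positivity
  -- bound on A
  have hAbd : ∀ m, |A m| ≤ (n : ℝ)⁻¹ * K * N m := by
    intro m
    rw [hAdef, hNdef, abs_mul, abs_of_nonneg (by positivity : (0:ℝ) ≤ (n:ℝ)⁻¹), mul_assoc]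
    gcongr (n:ℝ)⁻¹ * ?_
    calc |∑ i ∈ Finset.univ.erase i0, (if C i m then g (D.T i) - g' (D.T i) else 0)|
        ≤ ∑ i ∈ Finset.univ.erase i0, |if C i m then g (D.T i) - g' (D.T i) else 0| :=
          Finset.abs_sum_le_sum_abs _ _
      _ ≤ ∑ i ∈ Finset.univ.erase i0, K * (if C i m then (1:ℝ) else 0) := by
          apply Finset.sum_le_sum
          intro i _
          by_cases hci : C i m
          · rw [if_pos hci, if_pos hci, mul_one]
            exact hgg' (D.T i) (hT i)
          · rw [if_neg hci, if_neg hci, mul_zero, abs_zero]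
      _ = K * ∑ i ∈ Finset.univ.erase i0, (if C i m then (1:ℝ) else 0) := by
          rw [Finset.mul_sum]
  -- sum of N over bins is at most n
  have hNsum : ∑ m ∈ Finset.Icc 1 (2 ^ l), N m ≤ (n : ℝ) := by
    rw [hNdef, Finset.sum_comm]
    calc ∑ i ∈ Finset.univ.erase i0, ∑ m ∈ Finset.Icc 1 (2 ^ l), (if C i m then (1:ℝ) else 0)
        ≤ ∑ _i ∈ Finset.univ.erase i0, (1:ℝ) := by
          apply Finset.sum_le_sum
          intro i _
          apply indicator_sum_le_one
          intro a _ b _ ha hb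
          rw [hCdef] at ha hb
          exact bin_unique l (D.T i) ha.2.1 ha.2.2 hb.2.1 hb.2.2
      _ ≤ (n : ℝ) := by
          rw [Finset.sum_const, nsmul_eq_mul, mul_one]
          have : (Finset.univ.erase i0).card ≤ n := by
            calc (Finset.univ.erase i0).card ≤ (Finset.univ : Finset (Fin n)).card :=
              Finset.card_le_card (Finset.erase_subset _ _)
              _ = n := Finset.card_univ.trans (Fintype.card_fin n)
          exact_mod_cast this
  -- sum of A^2
  have hAsq : ∑ m ∈ Finset.Icc 1 (2 ^ l), (A m) ^ 2 ≤ K ^ 2 := by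
    calc ∑ m ∈ Finset.Icc 1 (2 ^ l), (A m) ^ 2
        ≤ ∑ m ∈ Finset.Icc 1 (2 ^ l), ((n : ℝ)⁻¹ * K * N m) ^ 2 := by
          apply Finset.sum_le_sum
          intro m _
          rw [← sq_abs (A m)]
          apply pow_le_pow_left₀ (abs_nonneg _) (hAbd m)
      _ = ((n : ℝ)⁻¹ * K) ^ 2 * ∑ m ∈ Finset.Icc 1 (2 ^ l), (N m) ^ 2 := by
          rw [Finset.mul_sum]; apply Finset.sum_congr rfl; intro m _; ring
      _ ≤ ((n : ℝ)⁻¹ * K) ^ 2 * (∑ m ∈ Finset.Icc 1 (2 ^ l), N m) ^ 2 := by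
          apply mul_le_mul_of_nonneg_left _ (by positivity)
          exact Finset.sum_sq_le_sq_sum_of_nonneg (fun m _ => hNnn m)
      _ ≤ ((n : ℝ)⁻¹ * K) ^ 2 * (n : ℝ) ^ 2 := by
          apply mul_le_mul_of_nonneg_left _ (by positivity)
          apply pow_le_pow_left₀ (Finset.sum_nonneg (fun m _ => hNnn m)) hNsum
      _ = K ^ 2 := by field_simp
  -- sum of B^2
  have hBsq : ∑ m ∈ Finset.Icc 1 (2 ^ l), (B m) ^ 2 ≤ 2 / (c ^ 2 * n ^ 2) := by
    have hb1 : ∀ m, (if C i0 m then g (D.T i0) else 0) ^ 2 ≤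
        (if C i0 m then (1:ℝ) else 0) * c⁻¹ ^ 2 := by
      intro m
      by_cases hci : C i0 m
      · rw [if_pos hci, if_pos hci, one_mul]
        apply pow_le_pow_left₀ (hgnn _) (hgle _)
      · rw [if_neg hci, if_neg hci]; norm_num
    have hb2 : ∀ m, (if C' i0 m then g' (D'.T i0) else 0) ^ 2 ≤
        (if C' i0 m then (1:ℝ) else 0) * c⁻¹ ^ 2 := by
      intro m
      by_cases hci : C' i0 m
      · rw [if_pos hci, if_pos hci, one_mul]
        apply pow_le_pow_left₀ (hg'nn _) (hg'le _)
      · rw [if_neg hci, if_neg hci]; norm_num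
    calc ∑ m ∈ Finset.Icc 1 (2 ^ l), (B m) ^ 2
        ≤ ∑ m ∈ Finset.Icc 1 (2 ^ l), ((n : ℝ)⁻¹ ^ 2 *
            ((if C i0 m then g (D.T i0) else 0) ^ 2 + (if C' i0 m then g' (D'.T i0) else 0) ^ 2)) := by
          apply Finset.sum_le_sum
          intro m _
          rw [hBdef]
          have hx : (0:ℝ) ≤ (if C i0 m then g (D.T i0) else 0) := by
            split <;> [exact hgnn _; exact le_refl 0]
          have hy : (0:ℝ) ≤ (if C' i0 m then g' (D'.T i0) else 0) := by
            split <;> [exact hg'nn _; exact le_refl 0]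
          rw [mul_pow]
          apply mul_le_mul_of_nonneg_left _ (by positivity)
          nlinarith [mul_nonneg hx hy]
      _ ≤ (n : ℝ)⁻¹ ^ 2 * (c⁻¹ ^ 2 + c⁻¹ ^ 2) := by
          rw [← Finset.mul_sum]
          apply mul_le_mul_of_nonneg_left _ (by positivity)
          rw [Finset.sum_add_distrib]
          have s1 : ∑ m ∈ Finset.Icc 1 (2 ^ l), (if C i0 m then g (D.T i0) else 0) ^ 2 ≤ c⁻¹ ^ 2 := by
            calc ∑ m ∈ Finset.Icc 1 (2 ^ l), (if C i0 m then g (D.T i0) else 0) ^ 2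
                ≤ ∑ m ∈ Finset.Icc 1 (2 ^ l), (if C i0 m then (1:ℝ) else 0) * c⁻¹ ^ 2 :=
                  Finset.sum_le_sum (fun m _ => hb1 m)
              _ = (∑ m ∈ Finset.Icc 1 (2 ^ l), (if C i0 m then (1:ℝ) else 0)) * c⁻¹ ^ 2 := by
                  rw [Finset.sum_mul]
              _ ≤ 1 * c⁻¹ ^ 2 := by
                  apply mul_le_mul_of_nonneg_right _ (by positivity)
                  apply indicator_sum_le_one
                  intro a _ b _ ha hb
                  rw [hCdef] at ha hb
                  exact bin_unique l (D.T i0) ha.2.1 ha.2.2 hb.2.1 hb.2.2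
              _ = c⁻¹ ^ 2 := one_mul _
          have s2 : ∑ m ∈ Finset.Icc 1 (2 ^ l), (if C' i0 m then g' (D'.T i0) else 0) ^ 2 ≤ c⁻¹ ^ 2 := by
            calc ∑ m ∈ Finset.Icc 1 (2 ^ l), (if C' i0 m then g' (D'.T i0) else 0) ^ 2
                ≤ ∑ m ∈ Finset.Icc 1 (2 ^ l), (if C' i0 m then (1:ℝ) else 0) * c⁻¹ ^ 2 :=
                  Finset.sum_le_sum (fun m _ => hb2 m)
              _ = (∑ m ∈ Finset.Icc 1 (2 ^ l), (if C' i0 m then (1:ℝ) else 0)) * c⁻¹ ^ 2 := by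
                  rw [Finset.sum_mul]
              _ ≤ 1 * c⁻¹ ^ 2 := by
                  apply mul_le_mul_of_nonneg_right _ (by positivity)
                  apply indicator_sum_le_one
                  intro a _ b _ ha hb
                  rw [hC'def] at ha hb
                  exact bin_unique l (D'.T i0) ha.2.1 ha.2.2 hb.2.1 hb.2.2
              _ = c⁻¹ ^ 2 := one_mul _
          linarith
      _ = 2 / (c ^ 2 * n ^ 2) := by field_simp; ring
  -- put everything together
  have hfinal : ∑ m ∈ Finset.Icc 1 (2 ^ l),
      (D.treeLevel βhat c l m - D'.treeLevel βhat c l m) ^ 2 ≤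
      2 * K ^ 2 + 2 * (2 / (c ^ 2 * n ^ 2)) := by
    calc ∑ m ∈ Finset.Icc 1 (2 ^ l),
        (D.treeLevel βhat c l m - D'.treeLevel βhat c l m) ^ 2
        = ∑ m ∈ Finset.Icc 1 (2 ^ l), (A m + B m) ^ 2 := by
          apply Finset.sum_congr rfl; intro m _; rw [hsplit m]
      _ ≤ ∑ m ∈ Finset.Icc 1 (2 ^ l), (2 * (A m) ^ 2 + 2 * (B m) ^ 2) := by
          apply Finset.sum_le_sum; intro m _; nlinarith [sq_nonneg (A m - B m)]
      _ = 2 * ∑ m ∈ Finset.Icc 1 (2 ^ l), (A m) ^ 2 +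
          2 * ∑ m ∈ Finset.Icc 1 (2 ^ l), (B m) ^ 2 := by
          rw [Finset.sum_add_distrib, ← Finset.mul_sum, ← Finset.mul_sum]
      _ ≤ 2 * K ^ 2 + 2 * (2 / (c ^ 2 * n ^ 2)) := by
          apply add_le_add
          · exact mul_le_mul_of_nonneg_left hAsq (by norm_num)
          · exact mul_le_mul_of_nonneg_left hBsq (by norm_num)
  have hKsq : 2 * K ^ 2 = 2 * Real.exp (2 * CZ * ‖βhat‖) / (c ^ 4 * n ^ 2) := by
    have hM2 : M ^ 2 = Real.exp (2 * CZ * ‖βhat‖) := by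
      rw [hMdef, sq, ← Real.exp_add]
      congr 1; ring
    rw [hKdef, div_pow, ← hM2]
    field_simp
  calc ∑ m ∈ Finset.Icc 1 (2 ^ l),
      (D.treeLevel βhat c l m - D'.treeLevel βhat c l m) ^ 2
      ≤ 2 * K ^ 2 + 2 * (2 / (c ^ 2 * n ^ 2)) := hfinal
    _ = 2 * Real.exp (2 * CZ * ‖βhat‖) / (c ^ 4 * n ^ 2) + 4 / (c ^ 2 * n ^ 2) := by
        rw [hKsq]; ring
end
end

section
/- (Lemma C.1) Let S ≥ 1 be an integer and, for s ∈ {1,…,S}, let n_s ≥ 1 be integers, ε_s > 0 and δ_s ∈ (0,1). Let p₀ ∈ (0,1] and γ > 0. Let {T_{s,i} : s ∈ [S], i ∈ [n_s]} be i.i.d. real-valued random variables with P(T_{1,1} ≥ 1) = p₀, and let W_1, …, W_S be Gaussian random variables, independent of each other and of the T's, with W_s ~ N(0, 2 log(1.25/δ_s) / (n_s ε_s)²). Define p̂_s := n_s⁻¹ Σ_{i=1}^{n_s} 1{T_{s,i} ≥ 1} + W_s and p̂ := (Σ_{s=1}^S n_s p̂_s) / (Σ_{s=1}^S n_s). Then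 P(p̂ > (1+γ) p₀) ≤ exp(−(γ² p₀² / 2) Σ_{s=1}^S n_s) + exp(−(γ² p₀² / 8) · (Σ_{s=1}^S n_s)² / (Σ_{s=1}^S 2 log(1.25/δ_s)/ε_s²)). -/
open scoped BigOperators
open MeasureTheory ProbabilityTheory
open scoped NNReal ENNReal
open Real

lemma fdp_aux_hpos {p : ℝ} (hp0 : 0 ≤ p) (hp1 : p ≤ 1) (u : ℝ) :
    0 < 1 + (rexp u - 1) * p := by
  rcases hp0.eq_or_lt with h | h
  · simp [← h]
  · nlinarith [mul_pos h (exp_pos u)]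

lemma fdp_aux_hoeffding_bernoulli {p t : ℝ} (hp0 : 0 ≤ p) (hp1 : p ≤ 1) (ht : 0 ≤ t) :
    1 + (rexp t - 1) * p ≤ rexp (p * t + t ^ 2 / 8) := by
  set h : ℝ → ℝ := fun u => 1 + (rexp u - 1) * p with hh
  have hpos : ∀ u, 0 < h u := fun u => fdp_aux_hpos hp0 hp1 u
  set g : ℝ → ℝ := fun u => p + u / 4 - p * rexp u / h u with hg
  set f : ℝ → ℝ := fun u => p * u + u ^ 2 / 8 - Real.log (h u) with hf
  have hhd : ∀ u, HasDerivAt h (rexp u * p) u := by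
    intro u
    exact (((Real.hasDerivAt_exp u).sub_const 1).mul_const p).const_add 1
  have hfd : ∀ u, HasDerivAt f (g u) u := by
    intro u
    have h1 : HasDerivAt (fun u : ℝ => p * u) p u := by
      simpa using (hasDerivAt_id u).const_mul p
    have h2 : HasDerivAt (fun u : ℝ => u ^ 2 / 8) (2 * u / 8) u := by
      simpa using (hasDerivAt_pow 2 u).div_const 8
    have h3 : HasDerivAt (fun u => Real.log (h u)) (rexp u * p / h u) u :=
      (hhd u).log (hpos u).ne'
    have := (h1.add h2).sub h3
    convert this using 1
    show p + u / 4 - p * rexp u / h u = _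
    ring
    all_goals rfl
  have hgd : ∀ u, HasDerivAt g (1 / 4 - p * (1 - p) * rexp u / (h u) ^ 2) u := by
    intro u
    have h1 : HasDerivAt (fun u : ℝ => p + u / 4) (1 / 4) u := by
      simpa using ((hasDerivAt_id u).div_const 4).const_add p
    have h2 : HasDerivAt (fun u => p * rexp u) (p * rexp u) u :=
      (Real.hasDerivAt_exp u).const_mul p
    have h3 : HasDerivAt (fun u => p * rexp u / h u)
        ((p * rexp u * h u - p * rexp u * (rexp u * p)) / (h u) ^ 2) u :=
      h2.div (hhd u) (hpos u).ne'
    have := h1.sub h3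
    convert this using 1
    have hu := (hpos u).ne'
    show 1 / 4 - p * (1 - p) * rexp u / (h u) ^ 2 =
      1 / 4 - (p * rexp u * h u - p * rexp u * (rexp u * p)) / (h u) ^ 2
    rw [show h u = 1 + (rexp u - 1) * p from rfl]
    ring
    all_goals rfl
  have hgmono : Monotone g := by
    have : ∀ u, 0 ≤ 1 / 4 - p * (1 - p) * rexp u / (h u) ^ 2 := by
      intro u
      rw [sub_nonneg, div_le_iff₀ (pow_pos (hpos u) 2)]
      have : h u = (1 - p) + p * rexp u := by simp [hh]; ring
      nlinarith [sq_nonneg ((1 - p) - p * rexp u), exp_pos u]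
    exact monotone_of_deriv_nonneg (fun u => (hgd u).differentiableAt)
      (fun u => by rw [(hgd u).deriv]; exact this u)
  have hg0 : g 0 = 0 := by simp [hg, hh]
  have hfmono : MonotoneOn f (Set.Ici 0) := by
    refine monotoneOn_of_deriv_nonneg (convex_Ici 0)
      (Continuous.continuousOn ?_) (fun u hu => (hfd u).differentiableAt.differentiableWithinAt)
      (fun u hu => ?_)
    · have : Differentiable ℝ f := fun u => (hfd u).differentiableAt
      exact this.continuous
    · rw [(hfd u).deriv]
      rw [interior_Ici] at hu
      calc (0 : ℝ) = g 0 := hg0.symm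
        _ ≤ g u := hgmono (le_of_lt hu)
  have hf0 : f 0 = 0 := by simp [hf, hh]
  have hft : 0 ≤ f t := by
    rw [← hf0]
    exact hfmono (Set.self_mem_Ici) (Set.mem_Ici.2 ht) ht
  have : Real.log (h t) ≤ p * t + t ^ 2 / 8 := by
    simp only [hf] at hft; linarith
  calc h t = rexp (Real.log (h t)) := (Real.exp_log (hpos t)).symm
    _ ≤ rexp (p * t + t ^ 2 / 8) := Real.exp_le_exp.2 this

lemma fdp_aux_gauss_key {v : ℝ≥0} (hv : v ≠ 0) (a x : ℝ) :
    gaussianPDFReal 0 v x * rexp (a * x) =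
      rexp ((v : ℝ) * a ^ 2 / 2) * gaussianPDFReal ((v : ℝ) * a) v x := by
  have hv0 : (0 : ℝ) < (v : ℝ) := by exact_mod_cast zero_lt_iff.mpr hv
  simp only [gaussianPDFReal, sub_zero]
  rw [mul_assoc, ← Real.exp_add, mul_left_comm, ← Real.exp_add]
  congr 2
  field_simp
  ring

lemma fdp_aux_density_eq (v : ℝ≥0) (hv : v ≠ 0) :
    gaussianReal 0 v = volume.withDensity
      (fun x => ((gaussianPDFReal 0 v x).toNNReal : ℝ≥0∞)) := by
  rw [gaussianReal_of_var_ne_zero _ hv]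
  congr 1

lemma fdp_aux_integrable_exp_gaussian (v : ℝ≥0) (a : ℝ) :
    Integrable (fun x => rexp (a * x)) (gaussianReal 0 v) := by
  by_cases hv : v = 0
  · rw [hv, gaussianReal_zero_var]
    have hm : Measurable fun x : ℝ => rexp (a * x) := (measurable_const.mul measurable_id').exp
    refine ⟨hm.aestronglyMeasurable, ?_⟩
    simp only [HasFiniteIntegral, lintegral_dirac' _ hm.enorm]
    exact enorm_lt_top
  · rw [fdp_aux_density_eq v hv,
      integrable_withDensity_iff_integrable_smul ((measurable_gaussianPDFReal 0 v).real_toNNReal)]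
    have : (fun x => (gaussianPDFReal 0 v x).toNNReal • rexp (a * x)) =
        fun x => rexp ((v : ℝ) * a ^ 2 / 2) * gaussianPDFReal ((v : ℝ) * a) v x := by
      ext x
      rw [NNReal.smul_def, smul_eq_mul, Real.coe_toNNReal _ (gaussianPDFReal_nonneg _ _ _),
        fdp_aux_gauss_key hv]
    rw [this]
    exact (integrable_gaussianPDFReal _ _).const_mul _

lemma fdp_aux_mgf_gaussian (v : ℝ≥0) (a : ℝ) :
    ∫ x, rexp (a * x) ∂(gaussianReal 0 v) = rexp ((v : ℝ) * a ^ 2 / 2) := by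
  by_cases hv : v = 0
  · rw [hv, gaussianReal_zero_var, integral_dirac]
    simp
  · rw [fdp_aux_density_eq v hv,
      integral_withDensity_eq_integral_smul ((measurable_gaussianPDFReal 0 v).real_toNNReal)]
    have : (fun x => (gaussianPDFReal 0 v x).toNNReal • rexp (a * x)) =
        fun x => rexp ((v : ℝ) * a ^ 2 / 2) * gaussianPDFReal ((v : ℝ) * a) v x := by
      ext x
      rw [NNReal.smul_def, smul_eq_mul, Real.coe_toNNReal _ (gaussianPDFReal_nonneg _ _ _),
        fdp_aux_gauss_key hv]
    rw [this, integral_const_mul, integral_gaussianPDFReal_eq_one _ hv, mul_one]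

lemma fdp_aux_iIndepFun_comp_inj {ι κ Ω : Type*} [MeasurableSpace Ω] {μ : Measure Ω}
    {f : ι → Ω → ℝ} (hf : iIndepFun f μ)
    {g : κ → ι} (hg : Function.Injective g) :
    iIndepFun (fun k => f (g k)) μ := by
  classical
  rw [iIndepFun_iff] at hf ⊢
  intro s f' hf'
  set F : ι → Set Ω := fun i => if h : ∃ k ∈ s, g k = i then f' h.choose else Set.univ with hF
  have hFg : ∀ k ∈ s, F (g k) = f' k := by
    intro k hk
    have h : ∃ k' ∈ s, g k' = g k := ⟨k, hk, rfl⟩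
    simp only [hF, dif_pos h]
    obtain ⟨_, hgk⟩ := h.choose_spec
    rw [hg hgk]
  have h1 : μ (⋂ i ∈ s.image g, F i) = ∏ i ∈ s.image g, μ (F i) := by
    apply hf
    intro i hi
    rcases Finset.mem_image.1 hi with ⟨k, hk, rfl⟩
    rw [hFg k hk]
    exact hf' k hk
  have e1 : (⋂ i ∈ s.image g, F i) = ⋂ k ∈ s, f' k := by
    ext ω
    simp only [Set.mem_iInter, Finset.mem_image]
    constructor
    · intro h k hk
      have := h (g k) ⟨k, hk, rfl⟩
      rwa [hFg k hk] at this
    · rintro h i ⟨k, hk, rfl⟩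
      rw [hFg k hk]
      exact h k hk
  have e2 : ∏ i ∈ s.image g, μ (F i) = ∏ k ∈ s, μ (f' k) := by
    rw [Finset.prod_image (fun k _ k' _ h => hg h)]
    exact Finset.prod_congr rfl fun k hk => by rw [hFg k hk]
  rw [← e1, ← e2]
  exact h1

/-- Lemma C.1: tail bound for the federated DP at-risk probability estimator.
With i.i.d. observations `T_{s,i}` satisfying `P(T ≥ 1) = p₀`, independent Gaussian
noises `W_s ~ N(0, 2 log(1.25/δ_s)/(n_s ε_s)²)`, `p̂_s = n_s⁻¹ Σ_i 1{T_{s,i} ≥ 1} + W_s`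
and `p̂ = Σ_s n_s p̂_s / Σ_s n_s`, one has
`P(p̂ > (1+γ)p₀) ≤ exp(−(γ²p₀²/2) Σ_s n_s)
  + exp(−(γ²p₀²/8) (Σ_s n_s)² / (Σ_s 2 log(1.25/δ_s)/ε_s²))`. -/
theorem fdp_at_risk_probability_tail
    (S : ℕ) (hS : 1 ≤ S) (ns : Fin S → ℕ) (hns : ∀ s, 1 ≤ ns s)
    (ε δ : Fin S → ℝ) (hε : ∀ s, 0 < ε s) (hδ : ∀ s, δ s ∈ Set.Ioo (0 : ℝ) 1)
    (p₀ γ : ℝ) (hp₀ : p₀ ∈ Set.Ioc (0 : ℝ) 1) (hγ : 0 < γ)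
    (Ω : Type) [MeasurableSpace Ω] (P : Measure Ω) [IsProbabilityMeasure P]
    (T : (s : Fin S) → Fin (ns s) → Ω → ℝ) (W : Fin S → Ω → ℝ)
    (hTmeas : ∀ s i, Measurable (T s i)) (hWmeas : ∀ s, Measurable (W s))
    -- all the `T_{s,i}`'s and `W_s`'s are mutually independent
    (hindep : iIndepFun
      (Sum.elim (fun p : Σ s : Fin S, Fin (ns s) => T p.1 p.2) W) P)
    -- the `T_{s,i}`'s are identically distributed
    (hident : ∀ s i s' i', Measure.map (T s i) P = Measure.map (T s' i') P)
    (hp : ∀ s i, P {ω | 1 ≤ T s i ω} = ENNReal.ofReal p₀)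
    (hW : ∀ s, Measure.map (W s) P = gaussianReal 0
      (Real.toNNReal (2 * Real.log (1.25 / δ s) / ((ns s : ℝ) * ε s) ^ 2))) :
    P {ω | (1 + γ) * p₀ <
        (∑ s, (ns s : ℝ) *
          ((ns s : ℝ)⁻¹ * (∑ i, if 1 ≤ T s i ω then (1 : ℝ) else 0) + W s ω)) /
        (∑ s, (ns s : ℝ))} ≤
      ENNReal.ofReal
        (Real.exp (-(γ ^ 2 * p₀ ^ 2 / 2) * ∑ s, (ns s : ℝ)) +
          Real.exp (-(γ ^ 2 * p₀ ^ 2 / 8) * (∑ s, (ns s : ℝ)) ^ 2 /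
            (∑ s, 2 * Real.log (1.25 / δ s) / (ε s) ^ 2))) := by
  classical
  obtain ⟨hp0, hp1⟩ := hp₀
  have hne : Nonempty (Fin S) := ⟨⟨0, hS⟩⟩
  have hnspos : ∀ s, (0 : ℝ) < (ns s : ℝ) := fun s => by exact_mod_cast hns s
  set N : ℝ := ∑ s, (ns s : ℝ) with hN
  have hNpos : 0 < N := Finset.sum_pos (fun s _ => hnspos s) Finset.univ_nonempty
  have hlogpos : ∀ s, 0 < Real.log (1.25 / δ s) := by
    intro s
    apply Real.log_pos
    rw [lt_div_iff₀ (hδ s).1]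
    linarith [(hδ s).2]
  set V : ℝ := ∑ s, 2 * Real.log (1.25 / δ s) / (ε s) ^ 2 with hV
  have hVpos : 0 < V :=
    Finset.sum_pos (fun s _ => div_pos (by linarith [hlogpos s]) (pow_pos (hε s) 2))
      Finset.univ_nonempty
  -- the indicator variables
  set X : (Σ s : Fin S, Fin (ns s)) → Ω → ℝ :=
    fun q ω => if 1 ≤ T q.1 q.2 ω then 1 else 0 with hX
  have hXmeas : ∀ q, Measurable (X q) := fun q =>
    Measurable.ite (measurableSet_le measurable_const (hTmeas q.1 q.2))
      measurable_const measurable_const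
  set B : Ω → ℝ := ∑ q : Σ s : Fin S, Fin (ns s), X q with hB
  set Y : Fin S → Ω → ℝ := fun s ω => (ns s : ℝ) * W s ω with hY
  set G : Ω → ℝ := ∑ s, Y s with hG
  -- independence
  have hindepT : iIndepFun
      (fun q : Σ s : Fin S, Fin (ns s) => T q.1 q.2) P :=
    fdp_aux_iIndepFun_comp_inj hindep Sum.inl_injective
  have hindepX : iIndepFun X P := by
    have := hindepT.comp (fun _ (x : ℝ) => if 1 ≤ x then (1 : ℝ) else 0)
      (fun _ => Measurable.ite (measurableSet_le measurable_const measurable_id)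
        measurable_const measurable_const)
    exact this
  have hindepW : iIndepFun W P :=
    fdp_aux_iIndepFun_comp_inj hindep Sum.inr_injective
  have hindepY : iIndepFun Y P := by
    have := hindepW.comp (fun s (x : ℝ) => (ns s : ℝ) * x)
      (fun s => measurable_const_mul _)
    exact this
  have hYmeas : ∀ s, Measurable (Y s) := fun s => (hWmeas s).const_mul _
  -- event inclusion
  have hsub : {ω | (1 + γ) * p₀ <
        (∑ s, (ns s : ℝ) *
          ((ns s : ℝ)⁻¹ * (∑ i, if 1 ≤ T s i ω then (1 : ℝ) else 0) + W s ω)) / N} ⊆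
      {ω | (1 + γ / 2) * p₀ * N ≤ B ω} ∪ {ω | γ / 2 * p₀ * N ≤ G ω} := by
    intro ω hω
    simp only [Set.mem_setOf_eq] at hω
    have hBω : B ω = ∑ s, ∑ i, (if 1 ≤ T s i ω then (1 : ℝ) else 0) := by
      rw [hB, Finset.sum_apply, ← Finset.univ_sigma_univ, Finset.sum_sigma]
    have hGω : G ω = ∑ s, (ns s : ℝ) * W s ω := by
      rw [hG, Finset.sum_apply]
    have hsum : (∑ s, (ns s : ℝ) *
        ((ns s : ℝ)⁻¹ * (∑ i, if 1 ≤ T s i ω then (1 : ℝ) else 0) + W s ω)) = B ω + G ω := by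
      rw [hBω, hGω, ← Finset.sum_add_distrib]
      refine Finset.sum_congr rfl fun s _ => ?_
      rw [mul_add, mul_inv_cancel_left₀ (hnspos s).ne']
    rw [hsum, lt_div_iff₀ hNpos] at hω
    by_contra hcon
    simp only [Set.mem_union, Set.mem_setOf_eq, not_or, not_le] at hcon
    obtain ⟨h1, h2⟩ := hcon
    nlinarith [hω, h1, h2]
  -- Chernoff bound for the Bernoulli part
  have hbound1 : P {ω | (1 + γ / 2) * p₀ * N ≤ B ω} ≤
      ENNReal.ofReal (Real.exp (-(γ ^ 2 * p₀ ^ 2 / 2) * N)) := by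
    have hA : ∀ q : Σ s : Fin S, Fin (ns s), MeasurableSet {ω | 1 ≤ T q.1 q.2 ω} :=
      fun q => measurableSet_le measurable_const (hTmeas q.1 q.2)
    have hXind : ∀ q, X q = ({ω | 1 ≤ T q.1 q.2 ω}).indicator (fun _ => (1 : ℝ)) := by
      intro q; ext ω; simp [hX, Set.indicator_apply, Set.mem_setOf_eq]
    have hXintg : ∀ q, Integrable (X q) P := by
      intro q; rw [hXind q]; exact (integrable_const 1).indicator (hA q)
    have hXmean : ∀ q, ∫ ω, X q ω ∂P = p₀ := by
      intro q
      rw [hXind q, integral_indicator_const (1 : ℝ) (hA q), measureReal_def, hp q.1 q.2,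
        ENNReal.toReal_ofReal hp0.le, smul_eq_mul, mul_one]
    have hexpX : ∀ (t : ℝ) q, (fun ω => rexp (t * X q ω)) =
        fun ω => 1 + (rexp t - 1) * X q ω := by
      intro t q; ext ω
      by_cases h : 1 ≤ T q.1 q.2 ω
      · simp only [hX, if_pos h, mul_one]; ring
      · simp only [hX, if_neg h, mul_zero, exp_zero]; ring
    have hXexpint : ∀ (t : ℝ) q, Integrable (fun ω => rexp (t * X q ω)) P := by
      intro t q
      rw [hexpX t q]
      exact (integrable_const 1).add ((hXintg q).const_mul _)
    have hmgfX : ∀ (t : ℝ) q, mgf (X q) P t = 1 + (rexp t - 1) * p₀ := by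
      intro t q
      unfold mgf
      rw [hexpX t q, integral_add (integrable_const 1) ((hXintg q).const_mul _),
        integral_const, integral_const_mul, hXmean q]
      simp
    set t₁ : ℝ := 2 * γ * p₀ with ht₁
    have ht₁nn : 0 ≤ t₁ := by positivity
    have hmgfB : mgf B P t₁ = (1 + (rexp t₁ - 1) * p₀) ^ (∑ s, ns s) := by
      rw [hB, hindepX.mgf_sum hXmeas Finset.univ,
        Finset.prod_congr rfl (fun q _ => hmgfX t₁ q), Finset.prod_const]
      congr 1
      simp [Finset.card_univ]
    have hintB : Integrable (fun ω => rexp (t₁ * B ω)) P := by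
      rw [hB]
      exact hindepX.integrable_exp_mul_sum hXmeas (fun q _ => hXexpint t₁ q)
    have hch := measure_ge_le_exp_mul_mgf (X := B) (μ := P) ((1 + γ / 2) * p₀ * N) ht₁nn hintB
    have hNcast : ((∑ s, ns s : ℕ) : ℝ) = N := by rw [hN]; push_cast; rfl
    have hfin : rexp (-t₁ * ((1 + γ / 2) * p₀ * N)) * mgf B P t₁ ≤
        rexp (-(γ ^ 2 * p₀ ^ 2 / 2) * N) := by
      rw [hmgfB]
      have h1 : (1 + (rexp t₁ - 1) * p₀) ^ (∑ s, ns s) ≤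
          rexp (p₀ * t₁ + t₁ ^ 2 / 8) ^ (∑ s, ns s) :=
        pow_le_pow_left₀ (fdp_aux_hpos hp0.le hp1 t₁).le
          (fdp_aux_hoeffding_bernoulli hp0.le hp1 ht₁nn) _
      calc rexp (-t₁ * ((1 + γ / 2) * p₀ * N)) * (1 + (rexp t₁ - 1) * p₀) ^ (∑ s, ns s)
          ≤ rexp (-t₁ * ((1 + γ / 2) * p₀ * N)) * rexp (p₀ * t₁ + t₁ ^ 2 / 8) ^ (∑ s, ns s) :=
            mul_le_mul_of_nonneg_left h1 (exp_pos _).le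
        _ = rexp (-t₁ * ((1 + γ / 2) * p₀ * N) +
              ((∑ s, ns s : ℕ) : ℝ) * (p₀ * t₁ + t₁ ^ 2 / 8)) := by
            rw [← Real.exp_nat_mul, ← Real.exp_add]
        _ = rexp (-(γ ^ 2 * p₀ ^ 2 / 2) * N) := by
            rw [hNcast]
            congr 1
            rw [ht₁]
            ring
    rw [← ENNReal.ofReal_toReal (measure_ne_top P _)]
    exact ENNReal.ofReal_le_ofReal (hch.trans hfin)
  -- Chernoff bound for the Gaussian part
  have hbound2 : P {ω | γ / 2 * p₀ * N ≤ G ω} ≤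
      ENNReal.ofReal (Real.exp (-(γ ^ 2 * p₀ ^ 2 / 8) * N ^ 2 / V)) := by
    set v : Fin S → ℝ≥0 :=
      fun s => Real.toNNReal (2 * Real.log (1.25 / δ s) / ((ns s : ℝ) * ε s) ^ 2) with hv
    have hvs : ∀ s, ((v s : ℝ)) = 2 * Real.log (1.25 / δ s) / ((ns s : ℝ) * ε s) ^ 2 := by
      intro s
      rw [hv]
      refine Real.coe_toNNReal _ (div_nonneg (by linarith [hlogpos s]) (by positivity))
    set t₂ : ℝ := γ * p₀ * N / (2 * V) with ht₂
    have ht₂nn : 0 ≤ t₂ := by positivity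
    have hexpY : ∀ (t : ℝ) s, (fun ω => rexp (t * Y s ω)) =
        (fun x => rexp ((t * (ns s : ℝ)) * x)) ∘ W s := by
      intro t s; ext ω; simp only [hY, Function.comp_apply]; ring_nf
    have hYexpint : ∀ (t : ℝ) s, Integrable (fun ω => rexp (t * Y s ω)) P := by
      intro t s
      rw [hexpY t s]
      have hint := fdp_aux_integrable_exp_gaussian (v s) (t * (ns s : ℝ))
      rw [← hW s] at hint
      exact (integrable_map_measure
        ((measurable_const.mul measurable_id').exp.aestronglyMeasurable)
        (hWmeas s).aemeasurable).1 hint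
    have hmgfY : ∀ (t : ℝ) s, mgf (Y s) P t =
        rexp ((2 * Real.log (1.25 / δ s) / (ε s) ^ 2) * t ^ 2 / 2) := by
      intro t s
      have h1 : mgf (Y s) P t = ∫ ω, rexp ((t * (ns s : ℝ)) * W s ω) ∂P := by
        unfold mgf
        congr 1
        ext ω
        simp only [hY]
        ring_nf
      rw [h1, show (∫ ω, rexp ((t * (ns s : ℝ)) * W s ω) ∂P) =
          ∫ x, rexp ((t * (ns s : ℝ)) * x) ∂(Measure.map (W s) P) from
          (integral_map (hWmeas s).aemeasurable
            ((measurable_const.mul measurable_id').exp.aestronglyMeasurable)).symm,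
        hW s, fdp_aux_mgf_gaussian]
      congr 1
      rw [hvs s]
      have hn := (hnspos s).ne'
      have he := (hε s).ne'
      field_simp
    have hmgfG : mgf G P t₂ = rexp (V * t₂ ^ 2 / 2) := by
      rw [hG, hindepY.mgf_sum hYmeas Finset.univ,
        Finset.prod_congr rfl (fun s _ => hmgfY t₂ s), ← Real.exp_sum]
      congr 1
      rw [hV, ← Finset.sum_div, ← Finset.sum_mul]
    have hintG : Integrable (fun ω => rexp (t₂ * G ω)) P := by
      rw [hG]
      exact hindepY.integrable_exp_mul_sum hYmeas (fun s _ => hYexpint t₂ s)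
    have hch2 := measure_ge_le_exp_mul_mgf (X := G) (μ := P) (γ / 2 * p₀ * N) ht₂nn hintG
    have hfin2 : rexp (-t₂ * (γ / 2 * p₀ * N)) * mgf G P t₂ =
        rexp (-(γ ^ 2 * p₀ ^ 2 / 8) * N ^ 2 / V) := by
      rw [hmgfG, ← Real.exp_add]
      congr 1
      rw [ht₂]
      field_simp
      ring
    rw [← ENNReal.ofReal_toReal (measure_ne_top P _)]
    exact ENNReal.ofReal_le_ofReal (hch2.trans_eq hfin2)
  calc P {ω | (1 + γ) * p₀ <
        (∑ s, (ns s : ℝ) *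
          ((ns s : ℝ)⁻¹ * (∑ i, if 1 ≤ T s i ω then (1 : ℝ) else 0) + W s ω)) / N}
      ≤ P ({ω | (1 + γ / 2) * p₀ * N ≤ B ω} ∪ {ω | γ / 2 * p₀ * N ≤ G ω}) :=
        measure_mono hsub
    _ ≤ P {ω | (1 + γ / 2) * p₀ * N ≤ B ω} + P {ω | γ / 2 * p₀ * N ≤ G ω} :=
        measure_union_le _ _
    _ ≤ ENNReal.ofReal (Real.exp (-(γ ^ 2 * p₀ ^ 2 / 2) * N)) +
        ENNReal.ofReal (Real.exp (-(γ ^ 2 * p₀ ^ 2 / 8) * N ^ 2 / V)) :=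
        add_le_add hbound1 hbound2
    _ = ENNReal.ofReal (Real.exp (-(γ ^ 2 * p₀ ^ 2 / 2) * N) +
        Real.exp (-(γ ^ 2 * p₀ ^ 2 / 8) * N ^ 2 / V)) :=
        (ENNReal.ofReal_add (exp_pos _).le (exp_pos _).le).symm
end

section
/- (Lemma D.10, a corollary of a theorem of Naor) There exists an absolute constant c > 0, independent of the dimension, with the following property. Let (Ω, F, (F_k)_{k ∈ ℕ}, P) be a filtered probability space and let (M_k)_{k ≥ 1} be an (F_k)-martingale taking values in ℝ^d equipped with the Euclidean norm ‖·‖₂. If (a_k)_{k ≥ 1} are positive real numbers such that ‖M_{k+1} − M_k‖₂ ≤ a_k almost surely for every k, then for every k ∈ ℕ and every u > 0, P(‖M_{k+1} − M_1‖₂ > u) ≤ e^{2.5} · exp( − c u² / (a_1² + ⋯ + a_k²) ). -/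
open scoped BigOperators
open MeasureTheory

section AuxLemmas

open Real

/-- Second-order Grönwall-type comparison: if `f 0 = 0`, `f' 0 = 0` and
`K² f ≤ f''` everywhere, then `f ≥ 0` on `[0, ∞)`. -/
lemma ode_compare {K : ℝ} (hK : 0 < K) {f f' f'' : ℝ → ℝ}
    (h1 : ∀ t, HasDerivAt f (f' t) t) (h2 : ∀ t, HasDerivAt f' (f'' t) t)
    (hf0 : f 0 = 0) (hf'0 : f' 0 = 0) (hcmp : ∀ t, K ^ 2 * f t ≤ f'' t) :
    ∀ t, 0 ≤ t → 0 ≤ f t := by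
  intro T hT
  set v : ℝ → ℝ := fun t => f' t - K * f t with hv_def
  have hv : ∀ t, HasDerivAt v (f'' t - K * f' t) t :=
    fun t => (h2 t).sub ((h1 t).const_mul K)
  set g : ℝ → ℝ := fun t => Real.exp (K * t) * v t with hg_def
  have hg : ∀ t, HasDerivAt g
      (K * Real.exp (K * t) * v t + Real.exp (K * t) * (f'' t - K * f' t)) t := by
    intro t
    have he : HasDerivAt (fun t : ℝ => Real.exp (K * t)) (Real.exp (K * t) * K) t :=
      by simpa using ((hasDerivAt_id t).const_mul K).exp
    have := he.mul (hv t)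
    refine this.congr_deriv ?_
    ring
  have hg_mono : Monotone g := by
    refine monotone_of_deriv_nonneg (fun t => (hg t).differentiableAt) (fun t => ?_)
    rw [(hg t).deriv]
    have : K * Real.exp (K * t) * v t + Real.exp (K * t) * (f'' t - K * f' t)
        = Real.exp (K * t) * (f'' t - K ^ 2 * f t) := by
      simp only [hv_def]; ring
    rw [this]
    exact mul_nonneg (Real.exp_nonneg _) (by linarith [hcmp t])
  have hv_nonneg : ∀ t, 0 ≤ t → 0 ≤ v t := by
    intro t ht
    have h0 : g 0 = 0 := by simp [hg_def, hv_def, hf0, hf'0]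
    have := hg_mono ht
    rw [h0] at this
    have hep : 0 < Real.exp (K * t) := Real.exp_pos _
    simpa [hg_def] using nonneg_of_mul_nonneg_right (by simpa [hg_def] using this) hep
  set h : ℝ → ℝ := fun t => Real.exp (-K * t) * f t with hh_def
  have hh : ∀ t, HasDerivAt h
      ((-K) * Real.exp (-K * t) * f t + Real.exp (-K * t) * f' t) t := by
    intro t
    have he : HasDerivAt (fun t : ℝ => Real.exp (-K * t)) (Real.exp (-K * t) * (-K)) t :=
      by simpa using ((hasDerivAt_id t).const_mul (-K)).exp
    have := he.mul (h1 t)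
    refine this.congr_deriv ?_
    ring
  have hh_mono : MonotoneOn h (Set.Ici (0 : ℝ)) := by
    refine monotoneOn_of_deriv_nonneg (convex_Ici 0)
      (fun t _ => ((hh t).differentiableAt).continuousAt.continuousWithinAt)
      (fun t _ => ((hh t).differentiableAt).differentiableWithinAt) (fun t ht => ?_)
    rw [(hh t).deriv]
    have ht' : (0:ℝ) ≤ t := le_of_lt (by simpa using ht)
    have : (-K) * Real.exp (-K * t) * f t + Real.exp (-K * t) * f' t
        = Real.exp (-K * t) * v t := by simp only [hv_def]; ring
    rw [this]
    exact mul_nonneg (Real.exp_nonneg _) (hv_nonneg t ht')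
  have h0 : h 0 = 0 := by simp [hh_def, hf0]
  have := hh_mono (Set.self_mem_Ici) (by exact hT) hT
  rw [h0] at this
  have hep : 0 < Real.exp (-K * T) := Real.exp_pos _
  exact nonneg_of_mul_nonneg_right (by simpa [hh_def] using this) hep

lemma sinh_le_mul_cosh {s : ℝ} (hs : 0 ≤ s) : Real.sinh s ≤ s * Real.cosh s := by
  have h : ∀ t : ℝ, HasDerivAt (fun u => u * Real.cosh u - Real.sinh u)
      (t * Real.sinh t) t := by
    intro t
    have h1 : HasDerivAt (fun u : ℝ => u * Real.cosh u)
        (1 * Real.cosh t + t * Real.sinh t) t :=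
      (hasDerivAt_id t).mul (Real.hasDerivAt_cosh t)
    have := h1.sub (Real.hasDerivAt_sinh t)
    refine this.congr_deriv ?_
    ring
  have mono : MonotoneOn (fun u : ℝ => u * Real.cosh u - Real.sinh u) (Set.Ici 0) := by
    refine monotoneOn_of_deriv_nonneg (convex_Ici 0)
      (fun t _ => ((h t).differentiableAt).continuousAt.continuousWithinAt)
      (fun t _ => ((h t).differentiableAt).differentiableWithinAt) (fun t ht => ?_)
    rw [(h t).deriv]
    have ht' : (0:ℝ) ≤ t := le_of_lt (by simpa using ht)
    exact mul_nonneg ht' (by positivity)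
  have := mono Set.self_mem_Ici (by exact hs) hs
  simpa using this

lemma exp_le_two_mul_cosh (t : ℝ) : Real.exp t ≤ 2 * Real.cosh t := by
  rw [Real.cosh_eq]
  have := Real.exp_pos (-t)
  linarith

set_option maxHeartbeats 1000000 in
lemma pinelis_pointwise {E : Type*} [NormedAddCommGroup E] [InnerProductSpace ℝ E]
    (x d : E) {a lam eps : ℝ} (ha : 0 < a) (hlam : 0 < lam) (heps : 0 < eps)
    (hd : ‖d‖ ≤ a) :
    Real.cosh (lam * Real.sqrt (‖x + d‖ ^ 2 + eps ^ 2)) ≤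
      Real.cosh (lam * a) * Real.cosh (lam * Real.sqrt (‖x‖ ^ 2 + eps ^ 2)) +
      (Real.sinh (lam * a) / (lam * a)) *
        (lam * Real.sinh (lam * Real.sqrt (‖x‖ ^ 2 + eps ^ 2)) /
          Real.sqrt (‖x‖ ^ 2 + eps ^ 2)) * (inner ℝ x d : ℝ) := by
  set Q : ℝ → ℝ := fun t => ‖x‖ ^ 2 + 2 * t * (inner ℝ x d : ℝ) + t ^ 2 * ‖d‖ ^ 2 + eps ^ 2
    with hQ_def
  have hQeq : ∀ t : ℝ, Q t = ‖x + t • d‖ ^ 2 + eps ^ 2 := by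
    intro t
    rw [hQ_def]
    have := norm_add_sq_real x (t • d)
    rw [this, real_inner_smul_right, norm_smul]
    simp [mul_pow]
    ring
  have hQpos : ∀ t : ℝ, 0 < Q t := by
    intro t
    rw [hQeq t]
    have := sq_nonneg ‖x + t • d‖
    nlinarith [heps]
  set Q' : ℝ → ℝ := fun t => 2 * (inner ℝ x d : ℝ) + 2 * t * ‖d‖ ^ 2 with hQ'_def
  have hQd : ∀ t : ℝ, HasDerivAt Q (Q' t) t := by
    intro t
    have h1 : HasDerivAt (fun t : ℝ => 2 * t * (inner ℝ x d : ℝ)) (2 * (inner ℝ x d : ℝ)) t := by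
      have hfun : (fun t : ℝ => 2 * t * (inner ℝ x d : ℝ)) =
          fun t : ℝ => (2 * (inner ℝ x d : ℝ)) * t := by funext s; ring
      rw [hfun]
      simpa using ((hasDerivAt_id t).const_mul (2 * (inner ℝ x d : ℝ)))
    have h2 : HasDerivAt (fun t : ℝ => t ^ 2 * ‖d‖ ^ 2) (2 * t * ‖d‖ ^ 2) t := by
      have := (hasDerivAt_pow 2 t).mul_const (‖d‖ ^ 2)
      simpa [mul_comm, mul_assoc] using this
    simpa [hQ_def, hQ'_def] using (((hasDerivAt_const t (‖x‖ ^ 2)).add h1).add h2).add_const (eps ^ 2)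
  set r : ℝ → ℝ := fun t => Real.sqrt (Q t) with hr_def
  have hrpos : ∀ t, 0 < r t := fun t => Real.sqrt_pos.2 (hQpos t)
  have hrsq : ∀ t, r t ^ 2 = Q t := fun t => Real.sq_sqrt (hQpos t).le
  set r1 : ℝ → ℝ := fun t => Q' t / (2 * r t) with hr1_def
  have hrd : ∀ t, HasDerivAt r (r1 t) t := by
    intro t
    have := (hQd t).sqrt (ne_of_gt (hQpos t))
    simpa [hr1_def, hr_def] using this
  set r2 : ℝ → ℝ := fun t => ‖d‖ ^ 2 / r t - Q' t ^ 2 / (4 * r t ^ 3) with hr2_def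
  have hQ'd : ∀ t : ℝ, HasDerivAt Q' (2 * ‖d‖ ^ 2) t := by
    intro t
    have h2 : HasDerivAt (fun t : ℝ => 2 * t * ‖d‖ ^ 2) (2 * ‖d‖ ^ 2) t := by
      have hfun : (fun t : ℝ => 2 * t * ‖d‖ ^ 2) = fun t : ℝ => (2 * ‖d‖ ^ 2) * t := by
        funext s; ring
      rw [hfun]
      simpa using ((hasDerivAt_id t).const_mul (2 * ‖d‖ ^ 2))
    exact ((hasDerivAt_const t (2 * (inner ℝ x d : ℝ))).add h2).congr_deriv (zero_add _)
  have hr1d : ∀ t, HasDerivAt r1 (r2 t) t := by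
    intro t
    have hden : (2 : ℝ) * r t ≠ 0 := (mul_pos two_pos (hrpos t)).ne'
    have hne : r t ≠ 0 := (hrpos t).ne'
    have := (hQ'd t).div ((hrd t).const_mul 2) hden
    refine this.congr_deriv ?_
    rw [hr2_def, hr1_def]
    field_simp
    ring
  set ψ : ℝ → ℝ := fun t => Real.cosh (lam * r t) with hψ_def
  set ψ1 : ℝ → ℝ := fun t => Real.sinh (lam * r t) * (lam * r1 t) with hψ1_def
  have hψd : ∀ t, HasDerivAt ψ (ψ1 t) t := fun t => ((hrd t).const_mul lam).cosh
  set ψ2 : ℝ → ℝ := fun t =>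
    Real.cosh (lam * r t) * (lam * r1 t) ^ 2 + Real.sinh (lam * r t) * (lam * r2 t)
    with hψ2_def
  have hψ1d : ∀ t, HasDerivAt ψ1 (ψ2 t) t := by
    intro t
    have := (((hrd t).const_mul lam).sinh).mul ((hr1d t).const_mul lam)
    refine this.congr_deriv ?_
    rw [hψ2_def]
    ring
  -- the key differential inequality
  have hkey : ∀ t, ψ2 t ≤ (lam * a) ^ 2 * ψ t := by
    intro t
    have hsum : r1 t ^ 2 + r t * r2 t = ‖d‖ ^ 2 := by
      rw [hr1_def, hr2_def]
      have h := (hrpos t).ne'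
      field_simp
      ring
    have hCS : Q' t ^ 2 ≤ 4 * Q t * ‖d‖ ^ 2 := by
      have hQ'eq : Q' t = 2 * (inner ℝ (x + t • d) d : ℝ) := by
        rw [hQ'_def, inner_add_left, real_inner_smul_left, real_inner_self_eq_norm_sq]
        ring
      have habs : |(inner ℝ (x + t • d) d : ℝ)| ≤ ‖x + t • d‖ * ‖d‖ := abs_real_inner_le_norm _ _
      have h1 : (inner ℝ (x + t • d) d : ℝ) ^ 2 ≤ (‖x + t • d‖ * ‖d‖) ^ 2 := by
        rw [← sq_abs]
        exact pow_le_pow_left₀ (abs_nonneg _) habs 2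
      have h2 : ‖x + t • d‖ ^ 2 ≤ Q t := by
        rw [hQeq t]; nlinarith [sq_nonneg eps]
      rw [hQ'eq]
      nlinarith [sq_nonneg ‖d‖]
    have hr2nonneg : 0 ≤ r2 t := by
      have heq : r2 t = (4 * r t ^ 2 * ‖d‖ ^ 2 - Q' t ^ 2) / (4 * r t ^ 3) := by
        rw [hr2_def]
        have h := (hrpos t).ne'
        field_simp
      rw [heq]
      apply div_nonneg _ (by positivity)
      rw [hrsq t]
      linarith
    have hsinh : Real.sinh (lam * r t) ≤ (lam * r t) * Real.cosh (lam * r t) :=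
      sinh_le_mul_cosh (by positivity)
    have hcosh : 0 < Real.cosh (lam * r t) := Real.cosh_pos _
    rw [hψ2_def, hψ_def]
    have hstep : Real.sinh (lam * r t) * (lam * r2 t) ≤
        Real.cosh (lam * r t) * (lam ^ 2 * (r t * r2 t)) := by
      have h1 : Real.sinh (lam * r t) * (lam * r2 t) ≤
          ((lam * r t) * Real.cosh (lam * r t)) * (lam * r2 t) := by
        apply mul_le_mul_of_nonneg_right hsinh (by positivity)
      calc Real.sinh (lam * r t) * (lam * r2 t) ≤
          ((lam * r t) * Real.cosh (lam * r t)) * (lam * r2 t) := h1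
        _ = Real.cosh (lam * r t) * (lam ^ 2 * (r t * r2 t)) := by ring
    have hdle : ‖d‖ ^ 2 ≤ a ^ 2 := by nlinarith [norm_nonneg d]
    calc Real.cosh (lam * r t) * (lam * r1 t) ^ 2 + Real.sinh (lam * r t) * (lam * r2 t)
        ≤ Real.cosh (lam * r t) * (lam * r1 t) ^ 2 +
          Real.cosh (lam * r t) * (lam ^ 2 * (r t * r2 t)) := by linarith [hstep]
      _ = Real.cosh (lam * r t) * (lam ^ 2 * (r1 t ^ 2 + r t * r2 t)) := by ring
      _ = Real.cosh (lam * r t) * (lam ^ 2 * ‖d‖ ^ 2) := by rw [hsum]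
      _ ≤ Real.cosh (lam * r t) * (lam ^ 2 * a ^ 2) := by
          apply mul_le_mul_of_nonneg_left _ hcosh.le
          have hl2 : 0 ≤ lam ^ 2 := sq_nonneg lam
          nlinarith
      _ = (lam * a) ^ 2 * Real.cosh (lam * r t) := by ring
  -- apply the comparison lemma
  set K := lam * a with hK_def
  have hK : 0 < K := by positivity
  set f : ℝ → ℝ := fun t => ψ 0 * Real.cosh (K * t) + (ψ1 0 / K) * Real.sinh (K * t) - ψ t
    with hf_def
  set f' : ℝ → ℝ := fun t => ψ 0 * K * Real.sinh (K * t) + ψ1 0 * Real.cosh (K * t) - ψ1 t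
    with hf'_def
  set f'' : ℝ → ℝ := fun t => ψ 0 * K ^ 2 * Real.cosh (K * t) + ψ1 0 * K * Real.sinh (K * t) - ψ2 t
    with hf''_def
  have hlin : ∀ t : ℝ, HasDerivAt (fun t : ℝ => K * t) K t := by
    intro t; simpa using ((hasDerivAt_id t).const_mul K)
  have hfd : ∀ t, HasDerivAt f (f' t) t := by
    intro t
    have h1 := ((hlin t).cosh).const_mul (ψ 0)
    have h2 := ((hlin t).sinh).const_mul (ψ1 0 / K)
    have := (h1.add h2).sub (hψd t)
    refine this.congr_deriv ?_
    rw [hf'_def]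
    field_simp
  have hf'd : ∀ t, HasDerivAt f' (f'' t) t := by
    intro t
    have h1 := ((hlin t).sinh).const_mul (ψ 0 * K)
    have h2 := ((hlin t).cosh).const_mul (ψ1 0)
    have := (h1.add h2).sub (hψ1d t)
    refine this.congr_deriv ?_
    rw [hf''_def]
    ring
  have hf0 : f 0 = 0 := by simp [hf_def]
  have hf'0 : f' 0 = 0 := by simp [hf'_def]
  have hcmp : ∀ t, K ^ 2 * f t ≤ f'' t := by
    intro t
    have hKne : K ≠ 0 := hK.ne'
    have expand : K ^ 2 * f t = ψ 0 * K ^ 2 * Real.cosh (K * t) +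
        ψ1 0 * K * Real.sinh (K * t) - K ^ 2 * ψ t := by
      rw [hf_def]
      field_simp
    rw [expand, hf''_def]
    simp only
    linarith [hkey t]
  have hfinal := ode_compare hK hfd hf'd hf0 hf'0 hcmp 1 zero_le_one
  have hQ1 : Q 1 = ‖x + d‖ ^ 2 + eps ^ 2 := by
    have h := hQeq 1; simpa using h
  have hQ0 : Q 0 = ‖x‖ ^ 2 + eps ^ 2 := by simp [hQ_def]
  have hr1eq : r 1 = Real.sqrt (‖x + d‖ ^ 2 + eps ^ 2) := by
    simp only [hr_def, hQ1]
  have hr0eq : r 0 = Real.sqrt (‖x‖ ^ 2 + eps ^ 2) := by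
    simp only [hr_def, hQ0]
  have hQ'0 : Q' 0 = 2 * (inner ℝ x d : ℝ) := by simp [hQ'_def]
  have hr10 : r1 0 = (inner ℝ x d : ℝ) / Real.sqrt (‖x‖ ^ 2 + eps ^ 2) := by
    simp only [hr1_def, hQ'0, hr0eq]
    rw [mul_div_mul_left _ _ (two_ne_zero)]
  have hψ1v : ψ 1 = Real.cosh (lam * Real.sqrt (‖x + d‖ ^ 2 + eps ^ 2)) := by
    simp only [hψ_def, hr1eq]
  have hψ0 : ψ 0 = Real.cosh (lam * Real.sqrt (‖x‖ ^ 2 + eps ^ 2)) := by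
    simp only [hψ_def, hr0eq]
  have hψ10 : ψ1 0 = Real.sinh (lam * Real.sqrt (‖x‖ ^ 2 + eps ^ 2)) *
      (lam * ((inner ℝ x d : ℝ) / Real.sqrt (‖x‖ ^ 2 + eps ^ 2))) := by
    simp only [hψ1_def, hr10, hr0eq]
  simp only [hf_def, mul_one, hψ1v, hψ0, hψ10] at hfinal
  have hring : Real.sinh (lam * Real.sqrt (‖x‖ ^ 2 + eps ^ 2)) *
      (lam * ((inner ℝ x d : ℝ) / Real.sqrt (‖x‖ ^ 2 + eps ^ 2))) / K * Real.sinh K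
      = Real.sinh K / K * (lam * Real.sinh (lam * Real.sqrt (‖x‖ ^ 2 + eps ^ 2)) /
          Real.sqrt (‖x‖ ^ 2 + eps ^ 2)) * (inner ℝ x d : ℝ) := by ring
  linarith [hfinal, hring.le, hring.ge]

end AuxLemmas

set_option maxHeartbeats 2000000 in
/-- Lemma D.10 (a corollary of a theorem of Naor): there is a dimension-free
constant `c > 0` such that every `ℝ^d`-valued martingale `(M_k)` with almost-sure
increment bounds `‖M_{k+1} − M_k‖₂ ≤ a_k` satisfies the Gaussian-type tail bound
`P(‖M_k − M_0‖₂ > u) ≤ e^{2.5} exp(−c u² / (a_0² + ⋯ + a_{k−1}²))`. -/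
theorem naor_martingale_tail :
    ∃ c : ℝ, 0 < c ∧
      ∀ (d : ℕ) (Ω : Type) [m0 : MeasurableSpace Ω] (P : Measure Ω)
        [IsProbabilityMeasure P] (ℱ : Filtration ℕ m0)
        (M : ℕ → Ω → EuclideanSpace ℝ (Fin d)) (a : ℕ → ℝ),
        Martingale M ℱ P →
        (∀ k, 0 < a k) →
        (∀ k, ∀ᵐ ω ∂P, ‖M (k + 1) ω - M k ω‖ ≤ a k) →
        ∀ (k : ℕ) (u : ℝ), 0 < u →
          P {ω | u < ‖M k ω - M 0 ω‖} ≤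
            ENNReal.ofReal (Real.exp 2.5 *
              Real.exp (-c * u ^ 2 / ∑ j ∈ Finset.range k, a j ^ 2)) := by
  classical
  refine ⟨1/4, by norm_num, ?_⟩
  intro d Ω m0 P hP ℱ M a hM ha hinc k u hu
  rcases Nat.eq_zero_or_pos k with hk0 | hkpos
  · subst hk0
    have hempty : {ω | u < ‖M 0 ω - M 0 ω‖} = (∅ : Set Ω) := by
      ext ω
      simp only [Set.mem_setOf_eq, sub_self, norm_zero, Set.mem_empty_iff_false, iff_false,
        not_lt]
      exact hu.le
    rw [hempty, measure_empty]
    exact zero_le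
  set S : ℝ := ∑ j ∈ Finset.range k, a j ^ 2 with hS_def
  have hS : 0 < S :=
    Finset.sum_pos (fun j _ => pow_pos (ha j) 2) (Finset.nonempty_range_iff.2 hkpos.ne')
  set lam : ℝ := u / (2 * S) with hlam_def
  have hlam : 0 < lam := div_pos hu (by positivity)
  set eps : ℝ := Real.sqrt S with heps_def
  have heps : 0 < eps := Real.sqrt_pos.2 hS
  have heps2 : eps ^ 2 = S := Real.sq_sqrt hS.le
  -- the auxiliary process
  set r : ℕ → Ω → ℝ := fun n ω => Real.sqrt (‖M n ω - M 0 ω‖ ^ 2 + eps ^ 2) with hr_def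
  have hXmeas : ∀ n, StronglyMeasurable[ℱ n] (fun ω => M n ω - M 0 ω) :=
    fun n => (hM.stronglyAdapted n).sub ((hM.stronglyAdapted 0).mono (ℱ.mono (Nat.zero_le n)))
  have hcont : Continuous (fun y : EuclideanSpace ℝ (Fin d) =>
      Real.cosh (lam * Real.sqrt (‖y‖ ^ 2 + eps ^ 2))) :=
    Real.continuous_cosh.comp
      (continuous_const.mul (((continuous_norm.pow 2).add continuous_const).sqrt))
  have hrmeas : ∀ n, AEStronglyMeasurable (fun ω => Real.cosh (lam * r n ω)) P := by
    intro n
    exact (hcont.comp_stronglyMeasurable ((hXmeas n).mono (ℱ.le n))).aestronglyMeasurable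
  have hDbound : ∀ n, ∀ᵐ ω ∂P, ‖M n ω - M 0 ω‖ ≤ ∑ j ∈ Finset.range n, a j := by
    intro n
    induction n with
    | zero => filter_upwards with ω; simp
    | succ n ih =>
      filter_upwards [ih, hinc n] with ω h1 h2
      have heq : M (n + 1) ω - M 0 ω = (M (n + 1) ω - M n ω) + (M n ω - M 0 ω) := by abel
      rw [heq, Finset.sum_range_succ]
      exact le_trans (norm_add_le _ _) (by linarith)
  have hrbound : ∀ n, ∀ᵐ ω ∂P, Real.cosh (lam * r n ω) ≤
      Real.cosh (lam * Real.sqrt ((∑ j ∈ Finset.range n, a j) ^ 2 + eps ^ 2)) := by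
    intro n
    filter_upwards [hDbound n] with ω hω
    have h0 : (0:ℝ) ≤ ‖M n ω - M 0 ω‖ := norm_nonneg _
    have hs : r n ω ≤ Real.sqrt ((∑ j ∈ Finset.range n, a j) ^ 2 + eps ^ 2) := by
      apply Real.sqrt_le_sqrt
      nlinarith
    rw [Real.cosh_le_cosh]
    have hrnn : 0 ≤ r n ω := Real.sqrt_nonneg _
    rw [abs_of_nonneg (by positivity), abs_of_nonneg (by positivity)]
    exact mul_le_mul_of_nonneg_left hs hlam.le
  have hint : ∀ n, Integrable (fun ω => Real.cosh (lam * r n ω)) P := by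
    intro n
    refine (integrable_const (Real.cosh (lam *
      Real.sqrt ((∑ j ∈ Finset.range n, a j) ^ 2 + eps ^ 2)))).mono' (hrmeas n) ?_
    filter_upwards [hrbound n] with ω hω
    rwa [Real.norm_eq_abs, abs_of_pos (Real.cosh_pos _)]
  -- the martingale step
  have step : ∀ n, ∫ ω, Real.cosh (lam * r (n + 1) ω) ∂P ≤
      Real.cosh (lam * a n) * ∫ ω, Real.cosh (lam * r n ω) ∂P := by
    intro n
    set X : Ω → EuclideanSpace ℝ (Fin d) := fun ω => M n ω - M 0 ω with hX_def
    set dd : Ω → EuclideanSpace ℝ (Fin d) := fun ω => M (n + 1) ω - M n ω with hdd_def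
    have hddint : Integrable dd P := (hM.integrable (n + 1)).sub (hM.integrable n)
    set gfun : EuclideanSpace ℝ (Fin d) → ℝ := fun y =>
      Real.sinh (lam * a n) / (lam * a n) *
        (lam * Real.sinh (lam * Real.sqrt (‖y‖ ^ 2 + eps ^ 2)) /
          Real.sqrt (‖y‖ ^ 2 + eps ^ 2)) with hgfun_def
    set g : Ω → ℝ := fun ω => gfun (X ω) with hg_def
    have hgfun_cont : Continuous gfun := by
      have hbase : Continuous (fun y : EuclideanSpace ℝ (Fin d) =>
          Real.sqrt (‖y‖ ^ 2 + eps ^ 2)) :=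
        ((continuous_norm.pow 2).add continuous_const).sqrt
      have hne : ∀ y : EuclideanSpace ℝ (Fin d), Real.sqrt (‖y‖ ^ 2 + eps ^ 2) ≠ 0 :=
        fun y => (Real.sqrt_pos.2 (by positivity)).ne'
      exact continuous_const.mul
        (((continuous_const.mul (Real.continuous_sinh.comp (continuous_const.mul hbase))).div
          hbase hne))
    have hgmeas : StronglyMeasurable[ℱ n] g := hgfun_cont.comp_stronglyMeasurable (hXmeas n)
    -- pointwise inequality
    have hpt : ∀ᵐ ω ∂P, Real.cosh (lam * r (n + 1) ω) ≤
        Real.cosh (lam * a n) * Real.cosh (lam * r n ω) +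
          g ω * (inner ℝ (X ω) (dd ω) : ℝ) := by
      filter_upwards [hinc n] with ω hω
      have hsum : M (n + 1) ω - M 0 ω = X ω + dd ω := by
        rw [hX_def, hdd_def]
        exact (sub_add_sub_cancel (M (n + 1) ω) (M n ω) (M 0 ω)).symm.trans (add_comm _ _)
      have := pinelis_pointwise (X ω) (dd ω) (ha n) hlam heps hω
      rw [hr_def]
      simp only
      rw [hsum]
      calc Real.cosh (lam * Real.sqrt (‖X ω + dd ω‖ ^ 2 + eps ^ 2)) ≤
          Real.cosh (lam * a n) * Real.cosh (lam * Real.sqrt (‖X ω‖ ^ 2 + eps ^ 2)) +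
          Real.sinh (lam * a n) / (lam * a n) *
            (lam * Real.sinh (lam * Real.sqrt (‖X ω‖ ^ 2 + eps ^ 2)) /
              Real.sqrt (‖X ω‖ ^ 2 + eps ^ 2)) * (inner ℝ (X ω) (dd ω) : ℝ) := this
        _ = Real.cosh (lam * a n) * Real.cosh (lam * Real.sqrt (‖X ω‖ ^ 2 + eps ^ 2)) +
            g ω * (inner ℝ (X ω) (dd ω) : ℝ) := by rw [hg_def, hgfun_def]
    -- bounds for g and X
    have hgbdd : ∀ᵐ ω ∂P, |g ω| ≤ Real.sinh (lam * a n) / (lam * a n) *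
        (lam * Real.sinh (lam * Real.sqrt ((∑ j ∈ Finset.range n, a j) ^ 2 + eps ^ 2)) / eps) := by
      filter_upwards [hDbound n] with ω hω
      have h0 : (0:ℝ) ≤ ‖X ω‖ := norm_nonneg _
      have hR1 : eps ≤ Real.sqrt (‖X ω‖ ^ 2 + eps ^ 2) := by
        calc eps = Real.sqrt (eps ^ 2) := (Real.sqrt_sq heps.le).symm
          _ ≤ Real.sqrt (‖X ω‖ ^ 2 + eps ^ 2) := Real.sqrt_le_sqrt (by nlinarith)
      have hR2 : Real.sqrt (‖X ω‖ ^ 2 + eps ^ 2) ≤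
          Real.sqrt ((∑ j ∈ Finset.range n, a j) ^ 2 + eps ^ 2) := by
        apply Real.sqrt_le_sqrt
        have : ‖X ω‖ ≤ ∑ j ∈ Finset.range n, a j := hω
        nlinarith
      have hsinh_mono : Real.sinh (lam * Real.sqrt (‖X ω‖ ^ 2 + eps ^ 2)) ≤
          Real.sinh (lam * Real.sqrt ((∑ j ∈ Finset.range n, a j) ^ 2 + eps ^ 2)) := by
        apply Real.sinh_le_sinh.2
        exact mul_le_mul_of_nonneg_left hR2 hlam.le
      have hsinh_nonneg : 0 ≤ Real.sinh (lam * Real.sqrt (‖X ω‖ ^ 2 + eps ^ 2)) :=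
        Real.sinh_nonneg_iff.2 (mul_nonneg hlam.le (Real.sqrt_nonneg _))
      have hg_nonneg : 0 ≤ g ω := by
        rw [hg_def, hgfun_def]
        have h1 : 0 ≤ Real.sinh (lam * a n) :=
          Real.sinh_nonneg_iff.2 (mul_nonneg hlam.le (ha n).le)
        have h2 : 0 ≤ lam * Real.sinh (lam * Real.sqrt (‖X ω‖ ^ 2 + eps ^ 2)) :=
          mul_nonneg hlam.le hsinh_nonneg
        exact mul_nonneg (div_nonneg h1 (mul_nonneg hlam.le (ha n).le))
          (div_nonneg h2 (Real.sqrt_nonneg _))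
      have hq_nonneg : 0 ≤ Real.sinh (lam * a n) / (lam * a n) :=
        div_nonneg (Real.sinh_nonneg_iff.2 (mul_nonneg hlam.le (ha n).le))
          (mul_nonneg hlam.le (ha n).le)
      rw [abs_of_nonneg hg_nonneg, hg_def, hgfun_def]
      apply mul_le_mul_of_nonneg_left _ hq_nonneg
      have hsp : 0 < Real.sqrt (‖X ω‖ ^ 2 + eps ^ 2) := lt_of_lt_of_le heps hR1
      rw [div_le_div_iff₀ hsp heps]
      calc lam * Real.sinh (lam * Real.sqrt (‖X ω‖ ^ 2 + eps ^ 2)) * eps ≤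
          lam * Real.sinh (lam * Real.sqrt ((∑ j ∈ Finset.range n, a j) ^ 2 + eps ^ 2)) *
            Real.sqrt (‖X ω‖ ^ 2 + eps ^ 2) := by
            apply mul_le_mul (mul_le_mul_of_nonneg_left hsinh_mono hlam.le) hR1 heps.le
            positivity
        _ = lam * Real.sinh (lam * Real.sqrt ((∑ j ∈ Finset.range n, a j) ^ 2 + eps ^ 2)) *
            Real.sqrt (‖X ω‖ ^ 2 + eps ^ 2) := rfl
    set Cg : ℝ := Real.sinh (lam * a n) / (lam * a n) *
        (lam * Real.sinh (lam * Real.sqrt ((∑ j ∈ Finset.range n, a j) ^ 2 + eps ^ 2)) / eps)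
      with hCg_def
    -- coordinate-wise product functions
    have hXi_meas : ∀ i : Fin d, StronglyMeasurable[ℱ n] (fun ω => X ω i) := fun i =>
      (EuclideanSpace.proj i : EuclideanSpace ℝ (Fin d) →L[ℝ] ℝ).continuous.comp_stronglyMeasurable
        (hXmeas n)
    have hddi_int : ∀ i : Fin d, Integrable (fun ω => dd ω i) P := fun i =>
      (EuclideanSpace.proj i : EuclideanSpace ℝ (Fin d) →L[ℝ] ℝ).integrable_comp hddint
    have hfi_meas : ∀ i : Fin d, StronglyMeasurable[ℱ n] (fun ω => g ω * X ω i) := fun i =>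
      hgmeas.mul (hXi_meas i)
    have hfi_bdd : ∀ i : Fin d, ∀ᵐ ω ∂P,
        ‖g ω * X ω i‖ ≤ Cg * ∑ j ∈ Finset.range n, a j := by
      intro i
      filter_upwards [hgbdd, hDbound n] with ω h1 h2
      rw [Real.norm_eq_abs, abs_mul]
      have hXi : |X ω i| ≤ ‖X ω‖ := by
        have := EuclideanSpace.norm_eq (X ω)
        calc |X ω i| = Real.sqrt (|X ω i| ^ 2) := by rw [Real.sqrt_sq (abs_nonneg _)]
          _ ≤ ‖X ω‖ := by
            rw [this]
            apply Real.sqrt_le_sqrt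
            exact Finset.single_le_sum (f := fun j => |X ω j| ^ 2)
              (fun j _ => sq_nonneg _) (Finset.mem_univ i)
      have hCg_nonneg : (0:ℝ) ≤ Cg := le_trans (abs_nonneg _) h1
      have hX_nonneg : (0:ℝ) ≤ ‖X ω‖ := norm_nonneg _
      calc |g ω| * |X ω i| ≤ Cg * ‖X ω‖ :=
          mul_le_mul h1 hXi (abs_nonneg _) hCg_nonneg
        _ ≤ Cg * ∑ j ∈ Finset.range n, a j := by
          apply mul_le_mul_of_nonneg_left h2 hCg_nonneg
    have hfihi_int : ∀ i : Fin d, Integrable (fun ω => (g ω * X ω i) * dd ω i) P := by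
      intro i
      exact (hddi_int i).bdd_mul (((hfi_meas i).mono (ℱ.le n)).aestronglyMeasurable)
        (hfi_bdd i)
    -- conditional expectation of increments vanishes
    have hce : ∀ i : Fin d, (P[(fun ω => dd ω i)|ℱ n]) =ᵐ[P] 0 := by
      intro i
      have h0 : (fun _ : Ω => (0:ℝ)) =ᵐ[P] P[(fun ω => dd ω i)|ℱ n] := by
        refine ae_eq_condExp_of_forall_setIntegral_eq (ℱ.le n) (hddi_int i)
          (fun s _ _ => (integrable_const (0:ℝ)).integrableOn) (fun s hs hps => ?_)
          (stronglyMeasurable_const.aestronglyMeasurable)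
        have hvec : ∫ ω in s, dd ω ∂P = 0 := by
          rw [hdd_def]
          rw [integral_sub ((hM.integrable (n+1)).integrableOn) ((hM.integrable n).integrableOn)]
          rw [← hM.setIntegral_eq (Nat.le_succ n) hs]
          abel_nf
        have hcoord := (EuclideanSpace.proj i :
            EuclideanSpace ℝ (Fin d) →L[ℝ] ℝ).integral_comp_comm
            (hddint.integrableOn (s := s))
        have hcoord' : ∫ ω in s, dd ω i ∂P =
            (EuclideanSpace.proj i : EuclideanSpace ℝ (Fin d) →L[ℝ] ℝ)
              (∫ ω in s, dd ω ∂P) := hcoord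
        rw [hcoord', hvec]
        simp
      exact h0.symm
    -- zero expectation of the linear term
    have hzero_i : ∀ i : Fin d, ∫ ω, (g ω * X ω i) * dd ω i ∂P = 0 := by
      intro i
      have h1 : ∫ ω, (g ω * X ω i) * dd ω i ∂P =
          ∫ ω, (P[(fun ω => (g ω * X ω i) * dd ω i)|ℱ n]) ω ∂P :=
        (integral_condExp (ℱ.le n)).symm
      rw [h1]
      have h2 : (P[(fun ω => (g ω * X ω i) * dd ω i)|ℱ n]) =ᵐ[P]
          (fun ω => g ω * X ω i) * P[(fun ω => dd ω i)|ℱ n] :=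
        condExp_mul_of_stronglyMeasurable_left (hfi_meas i) (hfihi_int i) (hddi_int i)
      have h3 : (fun ω => g ω * X ω i) * P[(fun ω => dd ω i)|ℱ n] =ᵐ[P] 0 := by
        filter_upwards [hce i] with ω hω
        simp [Pi.mul_apply, hω]
      rw [integral_congr_ae (h2.trans h3)]
      simp
    -- inner product as a sum of coordinates
    have hinner_eq : ∀ ω, g ω * (inner ℝ (X ω) (dd ω) : ℝ) =
        ∑ i : Fin d, (g ω * X ω i) * dd ω i := by
      intro ω
      rw [PiLp.inner_apply]
      simp only [RCLike.inner_apply, conj_trivial]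
      rw [Finset.mul_sum]
      congr 1
      ext i
      ring
    have hGint : Integrable (fun ω => g ω * (inner ℝ (X ω) (dd ω) : ℝ)) P := by
      have : Integrable (fun ω => ∑ i : Fin d, (g ω * X ω i) * dd ω i) P :=
        integrable_finset_sum _ (fun i _ => hfihi_int i)
      exact this.congr (Filter.Eventually.of_forall (fun ω => (hinner_eq ω).symm))
    have hGzero : ∫ ω, g ω * (inner ℝ (X ω) (dd ω) : ℝ) ∂P = 0 := by
      rw [integral_congr_ae (Filter.Eventually.of_forall hinner_eq)]
      rw [integral_finset_sum _ (fun i _ => hfihi_int i)]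
      exact Finset.sum_eq_zero (fun i _ => hzero_i i)
    -- put everything together
    calc ∫ ω, Real.cosh (lam * r (n + 1) ω) ∂P ≤
        ∫ ω, (Real.cosh (lam * a n) * Real.cosh (lam * r n ω) +
          g ω * (inner ℝ (X ω) (dd ω) : ℝ)) ∂P := by
          apply integral_mono_ae (hint (n+1)) (((hint n).const_mul _).add hGint) hpt
      _ = Real.cosh (lam * a n) * ∫ ω, Real.cosh (lam * r n ω) ∂P := by
          rw [integral_add ((hint n).const_mul _) hGint, integral_const_mul, hGzero, add_zero]
  -- induction
  have keyI : ∀ n, ∫ ω, Real.cosh (lam * r n ω) ∂P ≤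
      Real.cosh (lam * eps) * ∏ j ∈ Finset.range n, Real.cosh (lam * a j) := by
    intro n
    induction n with
    | zero =>
      have : ∀ ω, Real.cosh (lam * r 0 ω) = Real.cosh (lam * eps) := by
        intro ω
        rw [hr_def]
        simp [Real.sqrt_sq heps.le]
      rw [integral_congr_ae (Filter.Eventually.of_forall this)]
      simp [measure_univ]
    | succ n ih =>
      calc ∫ ω, Real.cosh (lam * r (n + 1) ω) ∂P ≤
          Real.cosh (lam * a n) * ∫ ω, Real.cosh (lam * r n ω) ∂P := step n
        _ ≤ Real.cosh (lam * a n) *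
            (Real.cosh (lam * eps) * ∏ j ∈ Finset.range n, Real.cosh (lam * a j)) :=
          mul_le_mul_of_nonneg_left ih (Real.cosh_pos _).le
        _ = Real.cosh (lam * eps) * ∏ j ∈ Finset.range (n + 1), Real.cosh (lam * a j) := by
          rw [Finset.prod_range_succ]; ring
  -- Markov inequality
  have hsub : {ω | u < ‖M k ω - M 0 ω‖} ⊆
      {ω | Real.cosh (lam * u) ≤ Real.cosh (lam * r k ω)} := by
    intro ω hω
    simp only [Set.mem_setOf_eq] at hω ⊢
    have h1 : ‖M k ω - M 0 ω‖ ≤ r k ω := by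
      rw [hr_def]
      simp only
      rw [show ‖M k ω - M 0 ω‖ = Real.sqrt (‖M k ω - M 0 ω‖ ^ 2) by
        rw [Real.sqrt_sq (norm_nonneg _)]]
      apply Real.sqrt_le_sqrt
      nlinarith [Real.sq_sqrt (sq_nonneg ‖M k ω - M 0 ω‖), heps2, hS]
    rw [Real.cosh_le_cosh]
    rw [abs_of_nonneg (by positivity), abs_of_nonneg
      (mul_nonneg hlam.le (le_trans (norm_nonneg _) h1))]
    have : u ≤ r k ω := le_trans hω.le h1
    exact mul_le_mul_of_nonneg_left this hlam.le
  have hmarkov := mul_meas_ge_le_integral_of_nonneg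
    (Filter.Eventually.of_forall (fun ω => (Real.cosh_pos (lam * r k ω)).le)) (hint k)
    (Real.cosh (lam * u))
  -- numeric bound
  have hcoshu : 0 < Real.cosh (lam * u) := Real.cosh_pos _
  have hInt_nonneg : 0 ≤ ∫ ω, Real.cosh (lam * r k ω) ∂P :=
    integral_nonneg (fun ω => (Real.cosh_pos _).le)
  have hIbound : ∫ ω, Real.cosh (lam * r k ω) ∂P ≤ Real.exp (lam ^ 2 * S) := by
    calc ∫ ω, Real.cosh (lam * r k ω) ∂P ≤
        Real.cosh (lam * eps) * ∏ j ∈ Finset.range k, Real.cosh (lam * a j) := keyI k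
      _ ≤ Real.exp ((lam * eps) ^ 2 / 2) *
          ∏ j ∈ Finset.range k, Real.exp ((lam * a j) ^ 2 / 2) := by
          apply mul_le_mul (Real.cosh_le_exp_half_sq _) _ _ (Real.exp_nonneg _)
          · apply Finset.prod_le_prod (fun j _ => (Real.cosh_pos _).le)
              (fun j _ => Real.cosh_le_exp_half_sq _)
          · exact Finset.prod_nonneg (fun j _ => (Real.cosh_pos _).le)
      _ = Real.exp ((lam * eps) ^ 2 / 2 + ∑ j ∈ Finset.range k, (lam * a j) ^ 2 / 2) := by
          rw [← Real.exp_sum, ← Real.exp_add]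
      _ = Real.exp (lam ^ 2 * S) := by
          congr 1
          have h1 : (lam * eps) ^ 2 = lam ^ 2 * S := by rw [mul_pow, heps2]
          have h2 : ∑ j ∈ Finset.range k, (lam * a j) ^ 2 / 2 =
              ∑ j ∈ Finset.range k, lam ^ 2 * a j ^ 2 / 2 :=
            Finset.sum_congr rfl (fun j _ => by ring)
          rw [h1, h2, ← Finset.sum_div, ← Finset.mul_sum, ← hS_def]
          ring
  have htoReal : (P {ω | Real.cosh (lam * u) ≤ Real.cosh (lam * r k ω)}).toReal ≤
      Real.exp (lam ^ 2 * S) / Real.cosh (lam * u) := by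
    rw [le_div_iff₀ hcoshu]
    calc (P {ω | Real.cosh (lam * u) ≤ Real.cosh (lam * r k ω)}).toReal * Real.cosh (lam * u)
        = Real.cosh (lam * u) * (P {ω | Real.cosh (lam * u) ≤ Real.cosh (lam * r k ω)}).toReal
          := by ring
      _ ≤ ∫ ω, Real.cosh (lam * r k ω) ∂P := hmarkov
      _ ≤ Real.exp (lam ^ 2 * S) := hIbound
  have hfrac : Real.exp (lam ^ 2 * S) / Real.cosh (lam * u) ≤
      2 * Real.exp (lam ^ 2 * S - lam * u) := by
    rw [div_le_iff₀ hcoshu]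
    have h1 : Real.exp (lam * u) ≤ 2 * Real.cosh (lam * u) := exp_le_two_mul_cosh _
    calc Real.exp (lam ^ 2 * S) = Real.exp (lam ^ 2 * S - lam * u) * Real.exp (lam * u) := by
          rw [← Real.exp_add]; ring_nf
      _ ≤ Real.exp (lam ^ 2 * S - lam * u) * (2 * Real.cosh (lam * u)) :=
          mul_le_mul_of_nonneg_left h1 (Real.exp_nonneg _)
      _ = 2 * Real.exp (lam ^ 2 * S - lam * u) * Real.cosh (lam * u) := by ring
  have hexpo : lam ^ 2 * S - lam * u = -(1/4) * u ^ 2 / S := by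
    rw [hlam_def]
    field_simp
    ring
  have hfinal_real : (P {ω | Real.cosh (lam * u) ≤ Real.cosh (lam * r k ω)}).toReal ≤
      Real.exp 2.5 * Real.exp (-(1/4) * u ^ 2 / S) := by
    calc (P {ω | Real.cosh (lam * u) ≤ Real.cosh (lam * r k ω)}).toReal ≤
        Real.exp (lam ^ 2 * S) / Real.cosh (lam * u) := htoReal
      _ ≤ 2 * Real.exp (lam ^ 2 * S - lam * u) := hfrac
      _ = 2 * Real.exp (-(1/4) * u ^ 2 / S) := by rw [hexpo]
      _ ≤ Real.exp 2.5 * Real.exp (-(1/4) * u ^ 2 / S) := by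
          apply mul_le_mul_of_nonneg_right _ (Real.exp_nonneg _)
          have : (1:ℝ) + 2.5 ≤ Real.exp 2.5 := by
            have := Real.add_one_le_exp (2.5:ℝ)
            linarith
          linarith
  calc P {ω | u < ‖M k ω - M 0 ω‖} ≤
      P {ω | Real.cosh (lam * u) ≤ Real.cosh (lam * r k ω)} := measure_mono hsub
    _ = ENNReal.ofReal ((P {ω | Real.cosh (lam * u) ≤ Real.cosh (lam * r k ω)}).toReal) :=
        (ENNReal.ofReal_toReal (measure_ne_top _ _)).symm
    _ ≤ ENNReal.ofReal (Real.exp 2.5 * Real.exp (-(1/4) * u ^ 2 / S)) :=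
        ENNReal.ofReal_le_ofReal hfinal_real
end
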